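/- arXiv:math/0405276 — 6 statements merged into one kernel-verified Lean document; each statement's English description precedes it below -/
import Mathlib

section
/- Let G₁, G₂, G₃ be real Hilbert spaces. If A ∈ S(G₁,G₂) and B ∈ S(G₂,G₃), then the composition BA belongs to S(G₁,G₃). -/
open ContinuousLinearMap
open scoped InnerProductSpace

noncomputable section

universe u v w

/-- A bounded operator `T` between real inner product spaces is *Hilbert–Schmidt* if
`∑ᵢ ‖T eᵢ‖²` is finite for some orthonormal (Hilbert) basis `(eᵢ)`. -/
def IsHilbertSchmidt {E : Type u} {F : Type v} [NormedAddCommGroup E] [InnerProductSpace ℝ E]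
    [NormedAddCommGroup F] [InnerProductSpace ℝ F] (T : E →L[ℝ] F) : Prop :=
  ∃ (ι : Type u) (b : HilbertBasis ι ℝ E), Summable fun i => ‖T (b i)‖ ^ 2

/-- A bounded operator is invertible with a bounded inverse. -/
def IsBoundedlyInvertible {E : Type u} {F : Type v} [NormedAddCommGroup E]
    [InnerProductSpace ℝ E] [NormedAddCommGroup F] [InnerProductSpace ℝ F]
    (T : E →L[ℝ] F) : Prop :=
  ∃ S : F →L[ℝ] E, S.comp T = ContinuousLinearMap.id ℝ E ∧
    T.comp S = ContinuousLinearMap.id ℝ F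

/-- `A ∈ S(G₁,G₂)`: `A` is invertible with bounded inverse and `1 - (A*A)^{1/2}` is
Hilbert–Schmidt (`(A*A)^{1/2}` being the positive square root of `A*A`). -/
def MemS {G₁ : Type u} {G₂ : Type v}
    [NormedAddCommGroup G₁] [InnerProductSpace ℝ G₁] [CompleteSpace G₁]
    [NormedAddCommGroup G₂] [InnerProductSpace ℝ G₂] [CompleteSpace G₂]
    (A : G₁ →L[ℝ] G₂) : Prop :=
  IsBoundedlyInvertible A ∧
    ∃ S : G₁ →L[ℝ] G₁, S.IsPositive ∧
      S.comp S = (ContinuousLinearMap.adjoint A).comp A ∧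
      IsHilbertSchmidt (ContinuousLinearMap.id ℝ G₁ - S)

/-- `A ∈ S(G)`: `A` is a positive, invertible operator on `G` such that `1 - A` is
Hilbert–Schmidt. -/
def MemSG {G : Type u} [NormedAddCommGroup G] [InnerProductSpace ℝ G] [CompleteSpace G]
    (A : G →L[ℝ] G) : Prop :=
  A.IsPositive ∧ IsBoundedlyInvertible A ∧
    IsHilbertSchmidt (ContinuousLinearMap.id ℝ G - A)

/-- A family of subspaces of a real Hilbert space is mutually quasi-orthogonal if some
`A ∈ S(G)` maps them to mutually orthogonal subspaces. -/
def MutuallyQuasiOrthogonal {G : Type u} [NormedAddCommGroup G] [InnerProductSpace ℝ G]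
    [CompleteSpace G] {ι : Type w} (V : ι → Submodule ℝ G) : Prop :=
  ∃ A : G →L[ℝ] G, MemSG A ∧
    ∀ i j, i ≠ j → ∀ x ∈ V i, ∀ y ∈ V j, ⟪A x, A y⟫_ℝ = 0

section Auxiliary

open scoped ENNReal NNReal

set_option maxHeartbeats 2000000
set_option synthInstance.maxHeartbeats 400000

open Finset

/-- Coefficients of the power series of `1 - sqrt(1-x)`. -/
def aseq : ℕ → ℝ
  | 0 => 0
  | (n+1) => 2 * catalan n / 4 ^ (n+1)

lemma aseq_zero : aseq 0 = 0 := rfl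

lemma aseq_one : aseq 1 = 1 / 2 := by norm_num [aseq]

lemma aseq_nonneg (n : ℕ) : 0 ≤ aseq n := by
  cases n with
  | zero => simp [aseq]
  | succ n =>
    simp only [aseq]
    positivity

/-- `centralBinom n / 4^n`, the telescoping auxiliary sequence. -/
def tseq (n : ℕ) : ℝ := (Nat.centralBinom n : ℝ) / 4 ^ n

lemma tseq_nonneg (n : ℕ) : 0 ≤ tseq n := by unfold tseq; positivity

lemma aseq_succ_eq (n : ℕ) : aseq (n + 1) = tseq n - tseq (n + 1) := by
  have h1 : ((n : ℝ) + 1) * (catalan n : ℝ) = (Nat.centralBinom n : ℝ) := by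
    exact_mod_cast congrArg (Nat.cast : ℕ → ℝ) (succ_mul_catalan_eq_centralBinom n)
  have h2 : ((n : ℝ) + 1) * (Nat.centralBinom (n + 1) : ℝ)
      = 2 * (2 * n + 1) * (Nat.centralBinom n : ℝ) := by
    exact_mod_cast congrArg (Nat.cast : ℕ → ℝ) (Nat.succ_mul_centralBinom_succ n)
  have hn : ((n : ℝ) + 1) ≠ 0 := by positivity
  have key : (Nat.centralBinom (n + 1) : ℝ)
      = 4 * (Nat.centralBinom n : ℝ) - 2 * (catalan n : ℝ) := by
    have key' : ((n : ℝ) + 1) * (Nat.centralBinom (n + 1) : ℝ)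
        = ((n : ℝ) + 1) * (4 * (Nat.centralBinom n : ℝ) - 2 * (catalan n : ℝ)) := by
      push_cast at h2 ⊢
      linear_combination h2 + 2 * h1
    exact mul_left_cancel₀ hn key'
  rw [aseq, tseq, tseq, key]
  have h4 : (4 : ℝ) ^ (n + 1) ≠ 0 := by positivity
  have h5 : (4 : ℝ) ^ n ≠ 0 := by positivity
  field_simp
  ring

lemma sum_aseq_le_one (N : ℕ) : ∑ i ∈ range N, aseq i ≤ 1 := by
  cases N with
  | zero => simp
  | succ M =>
    rw [Finset.sum_range_succ']
    simp only [aseq_zero, add_zero]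
    have : ∑ i ∈ range M, aseq (i + 1) = tseq 0 - tseq M := by
      rw [← Finset.sum_range_sub' tseq M]
      exact Finset.sum_congr rfl fun i _ => aseq_succ_eq i
    rw [this]
    have := tseq_nonneg M
    have : tseq 0 = 1 := by simp [tseq, Nat.centralBinom_zero]
    simp [this]
    linarith [tseq_nonneg M]

lemma summable_aseq : Summable aseq :=
  summable_of_sum_range_le aseq_nonneg sum_aseq_le_one

lemma tsum_aseq_le_one : ∑' n, aseq n ≤ 1 :=
  Summable.tsum_le_of_sum_range_le summable_aseq sum_aseq_le_one

/-- The key convolution identity, equivalent to the Catalan recurrence. -/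
lemma aseq_conv (n : ℕ) :
    ∑ k ∈ range (n + 2 + 1), aseq k * aseq (n + 2 - k) = 2 * aseq (n + 2) := by
  rw [Finset.sum_range_succ', aseq_zero, zero_mul, add_zero]
  rw [Finset.sum_range_succ]
  have : n + 2 - (n + 1 + 1) = 0 := by omega
  rw [this, aseq_zero, mul_zero, add_zero]
  have hterm : ∀ k ∈ range (n + 1),
      aseq (k + 1) * aseq (n + 2 - (k + 1))
        = (4 / 4 ^ (n + 2)) * ((catalan k : ℝ) * (catalan (n - k) : ℝ)) := by
    intro k hk
    have hk' : k ≤ n := by simpa using Nat.lt_succ_iff.mp (Finset.mem_range.mp hk)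
    have h1 : n + 2 - (k + 1) = (n - k) + 1 := by omega
    rw [h1, aseq, aseq]
    have hp : (4 : ℝ) ^ (k + 1) * 4 ^ (n - k + 1) = 4 ^ (n + 2) := by
      rw [← pow_add]
      congr 1
      omega
    rw [div_mul_div_comm, hp]
    have h4 : (4 : ℝ) ^ (n + 2) ≠ 0 := by positivity
    field_simp
    ring
  rw [Finset.sum_congr rfl hterm, ← Finset.mul_sum]
  have hc : (catalan (n + 1) : ℝ) = ∑ k ∈ range (n + 1), (catalan k : ℝ) * (catalan (n - k) : ℝ) := by
    have h := catalan_succ n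
    rw [Fin.sum_univ_eq_sum_range (fun i => catalan i * catalan (n - i)) (n + 1)] at h
    rw [h]
    push_cast
    rfl
  rw [← hc, aseq]
  ring



section Sqrt

variable {E : Type u} [NormedAddCommGroup E] [InnerProductSpace ℝ E] [CompleteSpace E]

lemma selfadjoint_inner_symm {X : E →L[ℝ] E} (hsa : IsSelfAdjoint X) (u v : E) :
    ⟪X u, v⟫_ℝ = ⟪u, X v⟫_ℝ := by
  have hadj : ContinuousLinearMap.adjoint X = X := by
    rw [← ContinuousLinearMap.star_eq_adjoint]; exact hsa
  conv_lhs => rw [← hadj]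
  exact ContinuousLinearMap.adjoint_inner_left X v u

lemma norm_le_one_of_inner (X : E →L[ℝ] E) (hsa : IsSelfAdjoint X)
    (h0 : ∀ x, 0 ≤ ⟪X x, x⟫_ℝ) (h1 : ∀ x, ⟪X x, x⟫_ℝ ≤ ‖x‖ ^ 2) : ‖X‖ ≤ 1 := by
  have htwo : ∀ u v : E, ⟪X u, v⟫_ℝ ≤ (⟪X u, u⟫_ℝ + ⟪X v, v⟫_ℝ) / 2 := by
    intro u v
    have h := h0 (u - v)
    rw [map_sub, inner_sub_left, inner_sub_right, inner_sub_right] at h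
    have hvu : ⟪X v, u⟫_ℝ = ⟪X u, v⟫_ℝ := by
      rw [selfadjoint_inner_symm hsa v u, real_inner_comm]
    linarith
  refine ContinuousLinearMap.opNorm_le_bound X zero_le_one fun x => ?_
  rw [one_mul]
  by_cases hx : ‖X x‖ = 0
  · rw [hx]; exact norm_nonneg x
  have hxpos : 0 < ‖X x‖ := lt_of_le_of_ne (norm_nonneg _) (Ne.symm hx)
  have hx0 : x ≠ 0 := by
    rintro rfl; simp at hx
  have hxp : 0 < ‖x‖ := norm_pos_iff.mpr hx0
  have hdp : 0 < ‖X x‖ / ‖x‖ := div_pos hxpos hxp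
  set t : ℝ := Real.sqrt (‖X x‖ / ‖x‖) with ht
  have htpos : 0 < t := Real.sqrt_pos.mpr hdp
  have ht2 : t ^ 2 = ‖X x‖ / ‖x‖ := Real.sq_sqrt hdp.le
  have key : ‖X x‖ ^ 2 = ⟪X (t • x), t⁻¹ • X x⟫_ℝ := by
    rw [map_smul, real_inner_smul_left, real_inner_smul_right,
      real_inner_self_eq_norm_sq]
    field_simp
  have hb1 : ⟪X (t • x), t • x⟫_ℝ ≤ t ^ 2 * ‖x‖ ^ 2 := by
    have := h1 (t • x)
    rwa [norm_smul, mul_pow, Real.norm_eq_abs, sq_abs] at this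
  have hb2 : ⟪X (t⁻¹ • X x), t⁻¹ • X x⟫_ℝ ≤ t⁻¹ ^ 2 * ‖X x‖ ^ 2 := by
    have := h1 (t⁻¹ • X x)
    rwa [norm_smul, mul_pow, Real.norm_eq_abs, sq_abs] at this
  have hmain : ‖X x‖ ^ 2 ≤ ‖x‖ * ‖X x‖ := by
    have h3 := htwo (t • x) (t⁻¹ • X x)
    rw [← key] at h3
    have e1 : t ^ 2 * ‖x‖ ^ 2 = ‖X x‖ * ‖x‖ := by
      rw [ht2]; field_simp
    have e2 : t⁻¹ ^ 2 * ‖X x‖ ^ 2 = ‖x‖ * ‖X x‖ := by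
      have hinv : t⁻¹ ^ 2 = ‖x‖ / ‖X x‖ := by
        rw [inv_pow, ht2, inv_div]
      rw [hinv]
      field_simp
    nlinarith [hb1, hb2]
  nlinarith [hmain, hxpos]

lemma norm_pow_le_one {X : E →L[ℝ] E} (hn : ‖X‖ ≤ 1) (n : ℕ) : ‖X ^ n‖ ≤ 1 := by
  cases n with
  | zero => rw [pow_zero]; exact ContinuousLinearMap.norm_id_le
  | succ n =>
    calc ‖X ^ (n + 1)‖ ≤ ‖X‖ ^ (n + 1) := norm_pow_le' X n.succ_pos
      _ ≤ 1 := pow_le_one₀ (norm_nonneg X) hn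

lemma pow_isPositive {X : E →L[ℝ] E} (hsa : IsSelfAdjoint X)
    (h0 : ∀ x, 0 ≤ ⟪X x, x⟫_ℝ) (n : ℕ) (x : E) : 0 ≤ ⟪(X ^ n) x, x⟫_ℝ := by
  rcases Nat.even_or_odd n with ⟨m, hm⟩ | ⟨m, hm⟩
  · subst hm
    have : X ^ (m + m) = X ^ m * X ^ m := by rw [← pow_add]
    rw [this, ContinuousLinearMap.mul_apply]
    rw [selfadjoint_inner_symm (hsa.pow m) ((X ^ m) x) x]
    exact real_inner_self_nonneg
  · subst hm
    have : X ^ (2 * m + 1) = X ^ m * X * X ^ m := by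
      rw [← pow_succ, ← pow_add]
      congr 1
      omega
    rw [this, ContinuousLinearMap.mul_apply, ContinuousLinearMap.mul_apply]
    rw [selfadjoint_inner_symm (hsa.pow m) (X ((X ^ m) x)) x]
    exact h0 ((X ^ m) x)

lemma sqrt_of_small (X : E →L[ℝ] E) (hsa : IsSelfAdjoint X) (hn : ‖X‖ ≤ 1)
    (h0 : ∀ x, 0 ≤ ⟪X x, x⟫_ℝ) :
    ∃ S : E →L[ℝ] E, S.IsPositive ∧ S * S = 1 - X := by
  have hsum : Summable fun n => ‖aseq n • X ^ n‖ := by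
    refine Summable.of_nonneg_of_le (fun n => norm_nonneg _) (fun n => ?_) summable_aseq
    calc ‖aseq n • X ^ n‖ ≤ ‖aseq n‖ * ‖X ^ n‖ := ContinuousLinearMap.opNorm_smul_le _ _
      _ = aseq n * ‖X ^ n‖ := by
          rw [Real.norm_eq_abs, abs_of_nonneg (aseq_nonneg n)]
      _ ≤ aseq n * 1 := mul_le_mul_of_nonneg_left (norm_pow_le_one hn n) (aseq_nonneg n)
      _ = aseq n := mul_one _
  have hsum' : Summable fun n => aseq n • X ^ n := hsum.of_norm
  set T := ∑' n, aseq n • X ^ n with hTdef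
  have hT : HasSum (fun n => aseq n • X ^ n) T := hsum'.hasSum
  have hTsa : IsSelfAdjoint T := by
    have hstar := hT.star
    simp only [star_smul, star_pow, hsa.star_eq, star_trivial] at hstar
    exact (hT.unique hstar).symm
  have hfun : ∀ n, (∑ k ∈ Finset.range (n + 1), aseq k * aseq (n - k)) • X ^ n
      = ∑ k ∈ Finset.range (n + 1), (aseq k • X ^ k) * (aseq (n - k) • X ^ (n - k)) := by
    intro n
    rw [Finset.sum_smul]
    refine Finset.sum_congr rfl fun k hk => ?_
    have hk' : k ≤ n := Nat.lt_succ_iff.mp (Finset.mem_range.mp hk)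
    rw [smul_mul_smul_comm, ← pow_add, Nat.add_sub_cancel' hk']
  have hTT : T * T = ∑' n, (∑ k ∈ Finset.range (n + 1), aseq k * aseq (n - k)) • X ^ n := by
    rw [tsum_mul_tsum_eq_tsum_sum_range_of_summable_norm hsum hsum]
    exact tsum_congr fun n => (hfun n).symm
  have hconv_sum : Summable fun n => (∑ k ∈ Finset.range (n + 1), aseq k * aseq (n - k)) • X ^ n :=
    ((summable_norm_sum_mul_range_of_summable_norm hsum hsum).of_norm).congr
      fun n => (hfun n).symm
  have hkey : T + T - T * T = X := by
    rw [hTT]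
    have h1 : HasSum
        (fun n => aseq n • X ^ n + aseq n • X ^ n
          - (∑ k ∈ Finset.range (n + 1), aseq k * aseq (n - k)) • X ^ n)
        (T + T - ∑' n, (∑ k ∈ Finset.range (n + 1), aseq k * aseq (n - k)) • X ^ n) :=
      (hT.add hT).sub hconv_sum.hasSum
    have h2 : ∀ n, aseq n • X ^ n + aseq n • X ^ n
        - (∑ k ∈ Finset.range (n + 1), aseq k * aseq (n - k)) • X ^ n
        = if n = 1 then X else 0 := by
      intro n
      match n with
      | 0 => simp [aseq_zero]
      | 1 =>
        have : ∑ k ∈ Finset.range 2, aseq k * aseq (1 - k) = 0 := by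
          simp [Finset.sum_range_succ, aseq_zero]
        rw [this, zero_smul, sub_zero, ← add_smul]
        norm_num [aseq_one]
      | (m + 2) =>
        rw [aseq_conv m, ← add_smul]
        simp [two_mul]
    have h3 : HasSum (fun n : ℕ => if n = 1 then X else (0 : E →L[ℝ] E)) X := hasSum_ite_eq 1 X
    rw [funext h2] at h1
    exact h1.unique h3
  refine ⟨1 - T, ⟨isSelfAdjoint_iff_isSymmetric.mp ((IsSelfAdjoint.one _).sub hTsa), fun x => ?_⟩, ?_⟩
  · rw [ContinuousLinearMap.reApplyInnerSelf_apply]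
    have hTx : HasSum (fun n => ⟪x, aseq n • (X ^ n) x⟫_ℝ) ⟪x, T x⟫_ℝ := by
      have h1 : HasSum (fun n => (aseq n • X ^ n) x) (T x) :=
        hT.mapL (ContinuousLinearMap.apply ℝ E x)
      exact h1.mapL (innerSL ℝ x)
    have hle : ⟪x, T x⟫_ℝ ≤ ‖x‖ ^ 2 := by
      have hbound : ∀ n, ⟪x, aseq n • (X ^ n) x⟫_ℝ ≤ aseq n * ‖x‖ ^ 2 := by
        intro n
        rw [real_inner_smul_right]
        refine mul_le_mul_of_nonneg_left ?_ (aseq_nonneg n)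
        calc ⟪x, (X ^ n) x⟫_ℝ ≤ ‖x‖ * ‖(X ^ n) x‖ := real_inner_le_norm _ _
          _ ≤ ‖x‖ * (‖X ^ n‖ * ‖x‖) :=
              mul_le_mul_of_nonneg_left ((X ^ n).le_opNorm x) (norm_nonneg x)
          _ ≤ ‖x‖ * (1 * ‖x‖) :=
              mul_le_mul_of_nonneg_left
                (mul_le_mul_of_nonneg_right (norm_pow_le_one hn n) (norm_nonneg x))
                (norm_nonneg x)
          _ = ‖x‖ ^ 2 := by ring
      have hsum2 : Summable fun n => aseq n * ‖x‖ ^ 2 := summable_aseq.mul_right _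
      calc ⟪x, T x⟫_ℝ = ∑' n, ⟪x, aseq n • (X ^ n) x⟫_ℝ := hTx.tsum_eq.symm
        _ ≤ ∑' n, aseq n * ‖x‖ ^ 2 := Summable.tsum_le_tsum hbound hTx.summable hsum2
        _ = (∑' n, aseq n) * ‖x‖ ^ 2 := by rw [tsum_mul_right]
        _ ≤ 1 * ‖x‖ ^ 2 := by
            have := tsum_aseq_le_one
            nlinarith [sq_nonneg ‖x‖]
        _ = ‖x‖ ^ 2 := one_mul _
    have : ⟪(1 - T) x, x⟫_ℝ = ‖x‖ ^ 2 - ⟪x, T x⟫_ℝ := by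
      rw [ContinuousLinearMap.sub_apply, inner_sub_left, ContinuousLinearMap.one_apply,
        real_inner_self_eq_norm_sq, real_inner_comm]
    simp only [RCLike.re_to_real]
    rw [this]
    linarith
  · have : (1 - T) * (1 - T) = 1 - (T + T - T * T) := by noncomm_ring
    rw [this, hkey]

lemma exists_sqrt (P : E →L[ℝ] E) (hP : P.IsPositive) :
    ∃ S : E →L[ℝ] E, S.IsPositive ∧ S * S = P := by
  set c : ℝ := ‖P‖ + 1 with hc
  have hcpos : (0 : ℝ) < c := by positivity
  set X : E →L[ℝ] E := 1 - c⁻¹ • P with hX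
  have hPsa : IsSelfAdjoint P := hP.isSelfAdjoint
  have hsaX : IsSelfAdjoint X := by
    have h1 : IsSelfAdjoint (c⁻¹ • P) := by
      show star _ = _
      rw [star_smul, star_trivial, hPsa.star_eq]
    exact (IsSelfAdjoint.one _).sub h1
  have hPnn : ∀ x, 0 ≤ ⟪P x, x⟫_ℝ := by
    intro x
    have := hP.inner_nonneg_left x
    simpa using this
  have hXval : ∀ x : E, ⟪X x, x⟫_ℝ = ‖x‖ ^ 2 - c⁻¹ * ⟪P x, x⟫_ℝ := by
    intro x
    rw [hX, ContinuousLinearMap.sub_apply, inner_sub_left, ContinuousLinearMap.one_apply,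
      real_inner_self_eq_norm_sq, ContinuousLinearMap.smul_apply, real_inner_smul_left]
  have h0X : ∀ x, 0 ≤ ⟪X x, x⟫_ℝ := by
    intro x
    rw [hXval]
    have hb : ⟪P x, x⟫_ℝ ≤ c * ‖x‖ ^ 2 := by
      calc ⟪P x, x⟫_ℝ ≤ ‖P x‖ * ‖x‖ := real_inner_le_norm _ _
        _ ≤ ‖P‖ * ‖x‖ * ‖x‖ := by
            have := P.le_opNorm x
            nlinarith [norm_nonneg x]
        _ ≤ c * ‖x‖ ^ 2 := by
            rw [hc]
            nlinarith [sq_nonneg ‖x‖, norm_nonneg x]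
    have h2 : c⁻¹ * ⟪P x, x⟫_ℝ ≤ ‖x‖ ^ 2 := by
      rw [inv_mul_le_iff₀ hcpos]
      nlinarith
    linarith
  have h1X : ∀ x, ⟪X x, x⟫_ℝ ≤ ‖x‖ ^ 2 := by
    intro x
    rw [hXval]
    have := hPnn x
    have : 0 ≤ c⁻¹ * ⟪P x, x⟫_ℝ := by positivity
    linarith
  have hnX : ‖X‖ ≤ 1 := norm_le_one_of_inner X hsaX h0X h1X
  obtain ⟨S₀, hS₀pos, hS₀sq⟩ := sqrt_of_small X hsaX hnX h0X
  have h1mX : (1 : E →L[ℝ] E) - X = c⁻¹ • P := by rw [hX]; abel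
  refine ⟨Real.sqrt c • S₀, ⟨?_, ?_⟩, ?_⟩
  · refine isSelfAdjoint_iff_isSymmetric.mp ?_
    show star _ = _
    rw [star_smul, star_trivial, hS₀pos.isSelfAdjoint.star_eq]
  · intro x
    rw [ContinuousLinearMap.reApplyInnerSelf_apply]
    simp only [ContinuousLinearMap.smul_apply, real_inner_smul_left, RCLike.re_to_real]
    have h1 := hS₀pos.2 x
    rw [ContinuousLinearMap.reApplyInnerSelf_apply] at h1
    simp only [RCLike.re_to_real] at h1
    have := Real.sqrt_nonneg c
    positivity
  · rw [smul_mul_assoc, mul_smul_comm, smul_smul, hS₀sq, h1mX, smul_smul,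
      Real.mul_self_sqrt hcpos.le, mul_inv_cancel₀ hcpos.ne', one_smul]

end Sqrt

section HS

variable {E : Type u} {F : Type v} [NormedAddCommGroup E] [InnerProductSpace ℝ E]
  [NormedAddCommGroup F] [InnerProductSpace ℝ F] [CompleteSpace E] [CompleteSpace F]

lemma enn_sq (t : ℝ) : (‖t‖₊ : ℝ≥0∞) ^ 2 = ENNReal.ofReal (t ^ 2) := by
  rw [← enorm_eq_nnnorm, Real.enorm_eq_ofReal_abs, ← ENNReal.ofReal_pow (abs_nonneg t), sq_abs]

lemma parseval_enn {ι : Type*} (b : HilbertBasis ι ℝ E) (y : E) :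
    ∑' i, (‖(⟪b i, y⟫_ℝ : ℝ)‖₊ : ℝ≥0∞) ^ 2 = (‖y‖₊ : ℝ≥0∞) ^ 2 := by
  have h : HasSum (fun i => ⟪y, b i⟫_ℝ * ⟪b i, y⟫_ℝ) ⟪y, y⟫_ℝ :=
    b.hasSum_inner_mul_inner y y
  have h2 : ∀ i, ⟪y, b i⟫_ℝ * ⟪b i, y⟫_ℝ = ⟪b i, y⟫_ℝ ^ 2 := fun i => by
    rw [sq]; congr 1; exact (real_inner_comm y (b i)).symm
  have h' : HasSum (fun i => ⟪b i, y⟫_ℝ ^ 2) (‖y‖ ^ 2) := by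
    simp only [h2] at h
    rwa [real_inner_self_eq_norm_sq y] at h
  calc ∑' i, (‖(⟪b i, y⟫_ℝ : ℝ)‖₊ : ℝ≥0∞) ^ 2
      = ∑' i, ENNReal.ofReal (⟪b i, y⟫_ℝ ^ 2) := by simp_rw [enn_sq]
    _ = ENNReal.ofReal (‖y‖ ^ 2) := by
        rw [← ENNReal.ofReal_tsum_of_nonneg (fun i => sq_nonneg _) h'.summable, h'.tsum_eq]
    _ = (‖y‖₊ : ℝ≥0∞) ^ 2 := by
        rw [← enn_sq ‖y‖]; simp

lemma hs_key {ι κ : Type*} (T : E →L[ℝ] F) (b : HilbertBasis ι ℝ E) (c : HilbertBasis κ ℝ F) :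
    ∑' i, (‖T (b i)‖₊ : ℝ≥0∞) ^ 2 = ∑' j, (‖(ContinuousLinearMap.adjoint T) (c j)‖₊ : ℝ≥0∞) ^ 2 := by
  calc ∑' i, (‖T (b i)‖₊ : ℝ≥0∞) ^ 2
      = ∑' i, ∑' j, (‖(⟪c j, T (b i)⟫_ℝ : ℝ)‖₊ : ℝ≥0∞) ^ 2 :=
        tsum_congr fun i => (parseval_enn c (T (b i))).symm
    _ = ∑' j, ∑' i, (‖(⟪b i, (ContinuousLinearMap.adjoint T) (c j)⟫_ℝ : ℝ)‖₊ : ℝ≥0∞) ^ 2 := by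
        rw [ENNReal.tsum_comm]
        refine tsum_congr fun j => tsum_congr fun i => ?_
        have : ⟪c j, T (b i)⟫_ℝ = ⟪b i, (ContinuousLinearMap.adjoint T) (c j)⟫_ℝ := by
          rw [← ContinuousLinearMap.adjoint_inner_left T (b i) (c j)]
          exact real_inner_comm _ _
        rw [this]
    _ = ∑' j, (‖(ContinuousLinearMap.adjoint T) (c j)‖₊ : ℝ≥0∞) ^ 2 :=
        tsum_congr fun j => parseval_enn b _

lemma summable_sq_iff {ι : Type*} (g : ι → F) :
    Summable (fun i => ‖g i‖ ^ 2) ↔ ∑' i, (‖g i‖₊ : ℝ≥0∞) ^ 2 ≠ ⊤ := by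
  rw [show (fun i => ‖g i‖ ^ 2) = (fun i => ((‖g i‖₊ ^ 2 : ℝ≥0) : ℝ)) by
    ext i; push_cast; rfl]
  rw [NNReal.summable_coe, ← ENNReal.tsum_coe_ne_top_iff_summable]
  push_cast
  rfl

lemma hs_iff {ι : Type u} (T : E →L[ℝ] F) (b : HilbertBasis ι ℝ E) :
    IsHilbertSchmidt T ↔ Summable fun i => ‖T (b i)‖ ^ 2 := by
  constructor
  · rintro ⟨ι', b', h⟩
    obtain ⟨w, c, -⟩ := exists_hilbertBasis ℝ F
    rw [summable_sq_iff] at h ⊢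
    rwa [hs_key T b c, ← hs_key T b' c]
  · intro h
    exact ⟨ι, b, h⟩

lemma IsHilbertSchmidt.adjoint {T : E →L[ℝ] F} (h : IsHilbertSchmidt T) :
    IsHilbertSchmidt (ContinuousLinearMap.adjoint T) := by
  obtain ⟨ι, b, hb⟩ := h
  obtain ⟨w, c, -⟩ := exists_hilbertBasis ℝ F
  refine ⟨w, c, ?_⟩
  rw [summable_sq_iff] at hb ⊢
  rwa [← hs_key T b c]

lemma IsHilbertSchmidt.comp_left {G : Type w} [NormedAddCommGroup G] [InnerProductSpace ℝ G]
    [CompleteSpace G] {T : E →L[ℝ] F} (h : IsHilbertSchmidt T) (U : F →L[ℝ] G) :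
    IsHilbertSchmidt (U.comp T) := by
  obtain ⟨ι, b, hb⟩ := h
  refine ⟨ι, b, ?_⟩
  refine Summable.of_nonneg_of_le (fun i => sq_nonneg _) (fun i => ?_) (hb.mul_left (‖U‖ ^ 2))
  have := U.le_opNorm (T (b i))
  calc ‖U.comp T (b i)‖ ^ 2 = ‖U (T (b i))‖ ^ 2 := rfl
    _ ≤ (‖U‖ * ‖T (b i)‖) ^ 2 := by
        apply pow_le_pow_left₀ (norm_nonneg _) this
    _ = ‖U‖ ^ 2 * ‖T (b i)‖ ^ 2 := by ring

lemma IsHilbertSchmidt.comp_right {G : Type w} [NormedAddCommGroup G] [InnerProductSpace ℝ G]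
    [CompleteSpace G] {T : E →L[ℝ] F} (h : IsHilbertSchmidt T) (V : G →L[ℝ] E) :
    IsHilbertSchmidt (T.comp V) := by
  have h1 : IsHilbertSchmidt ((ContinuousLinearMap.adjoint V).comp (ContinuousLinearMap.adjoint T)) :=
    h.adjoint.comp_left _
  have h2 := h1.adjoint
  rwa [ContinuousLinearMap.adjoint_comp, ContinuousLinearMap.adjoint_adjoint,
    ContinuousLinearMap.adjoint_adjoint] at h2

lemma IsHilbertSchmidt.add {T₁ T₂ : E →L[ℝ] F} (h₁ : IsHilbertSchmidt T₁)
    (h₂ : IsHilbertSchmidt T₂) : IsHilbertSchmidt (T₁ + T₂) := by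
  obtain ⟨w, b, -⟩ := exists_hilbertBasis ℝ E
  rw [hs_iff _ b] at h₁ h₂ ⊢
  refine Summable.of_nonneg_of_le (fun i => sq_nonneg _) (fun i => ?_) ((h₁.add h₂).mul_left 2)
  calc ‖(T₁ + T₂) (b i)‖ ^ 2 = ‖T₁ (b i) + T₂ (b i)‖ ^ 2 := rfl
    _ ≤ (‖T₁ (b i)‖ + ‖T₂ (b i)‖) ^ 2 := by
        apply pow_le_pow_left₀ (norm_nonneg _) (norm_add_le _ _)
    _ ≤ 2 * (‖T₁ (b i)‖ ^ 2 + ‖T₂ (b i)‖ ^ 2) := by nlinarith [sq_nonneg (‖T₁ (b i)‖ - ‖T₂ (b i)‖)]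
    _ = 2 * (fun i => ‖T₁ (b i)‖ ^ 2 + ‖T₂ (b i)‖ ^ 2) i := rfl

end HS

end Auxiliary

theorem memS_comp {G₁ : Type u} {G₂ : Type v} {G₃ : Type w}
    [NormedAddCommGroup G₁] [InnerProductSpace ℝ G₁] [CompleteSpace G₁]
    [NormedAddCommGroup G₂] [InnerProductSpace ℝ G₂] [CompleteSpace G₂]
    [NormedAddCommGroup G₃] [InnerProductSpace ℝ G₃] [CompleteSpace G₃]
    (A : G₁ →L[ℝ] G₂) (B : G₂ →L[ℝ] G₃) (hA : MemS A) (hB : MemS B) :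
    MemS (B.comp A) := by
  obtain ⟨hAinv, SA, hSApos, hSAsq, hSAhs⟩ := hA
  obtain ⟨hBinv, SB, hSBpos, hSBsq, hSBhs⟩ := hB
  constructor
  · obtain ⟨A', hA'1, hA'2⟩ := hAinv
    obtain ⟨B', hB'1, hB'2⟩ := hBinv
    refine ⟨A'.comp B', ?_, ?_⟩
    · ext x
      have h1 := ContinuousLinearMap.ext_iff.mp hB'1 (A x)
      have h2 := ContinuousLinearMap.ext_iff.mp hA'1 x
      simp only [ContinuousLinearMap.comp_apply, ContinuousLinearMap.coe_id, id_eq, ContinuousLinearMap.id_apply] at h1 h2 ⊢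
      rw [h1, h2]
    · ext x
      have h1 := ContinuousLinearMap.ext_iff.mp hA'2 (B' x)
      have h2 := ContinuousLinearMap.ext_iff.mp hB'2 x
      simp only [ContinuousLinearMap.comp_apply, ContinuousLinearMap.coe_id, id_eq, ContinuousLinearMap.id_apply] at h1 h2 ⊢
      rw [h1, h2]
  · set C : G₁ →L[ℝ] G₃ := B.comp A with hCdef
    set P : G₁ →L[ℝ] G₁ := (ContinuousLinearMap.adjoint C).comp C with hPdef
    have hPpos : P.IsPositive := by
      constructor
      · refine isSelfAdjoint_iff_isSymmetric.mp ?_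
        show star _ = _
        rw [ContinuousLinearMap.star_eq_adjoint, hPdef, ContinuousLinearMap.adjoint_comp,
          ContinuousLinearMap.adjoint_adjoint]
      · intro x
        rw [ContinuousLinearMap.reApplyInnerSelf_apply]
        have : ⟪P x, x⟫_ℝ = ⟪C x, C x⟫_ℝ := by
          rw [hPdef, ContinuousLinearMap.comp_apply,
            ContinuousLinearMap.adjoint_inner_left]
        simp only [RCLike.re_to_real, this]
        exact real_inner_self_nonneg
    obtain ⟨S, hSpos, hSsq⟩ := exists_sqrt P hPpos
    refine ⟨S, hSpos, ?_, ?_⟩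
    · rw [← ContinuousLinearMap.mul_def]
      exact hSsq
    · -- 1 - A†A is Hilbert-Schmidt
      have hA2 : IsHilbertSchmidt
          ((1 : G₁ →L[ℝ] G₁) - (ContinuousLinearMap.adjoint A).comp A) := by
        have e : ((1 : G₁ →L[ℝ] G₁) + SA) * (1 - SA) = 1 - SA * SA := by noncomm_ring
        rw [ContinuousLinearMap.mul_def SA SA, hSAsq] at e
        rw [← e, ContinuousLinearMap.mul_def]
        exact IsHilbertSchmidt.comp_left hSAhs _
      have hB2 : IsHilbertSchmidt
          ((1 : G₂ →L[ℝ] G₂) - (ContinuousLinearMap.adjoint B).comp B) := by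
        have e : ((1 : G₂ →L[ℝ] G₂) + SB) * (1 - SB) = 1 - SB * SB := by noncomm_ring
        rw [ContinuousLinearMap.mul_def SB SB, hSBsq] at e
        rw [← e, ContinuousLinearMap.mul_def]
        exact IsHilbertSchmidt.comp_left hSBhs _
      have hmid : IsHilbertSchmidt ((ContinuousLinearMap.adjoint A).comp
          ((((1 : G₂ →L[ℝ] G₂) - (ContinuousLinearMap.adjoint B).comp B)).comp A)) :=
        (hB2.comp_right A).comp_left _
      have hsum : IsHilbertSchmidt
          (((1 : G₁ →L[ℝ] G₁) - (ContinuousLinearMap.adjoint A).comp A)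
            + (ContinuousLinearMap.adjoint A).comp
              ((((1 : G₂ →L[ℝ] G₂) - (ContinuousLinearMap.adjoint B).comp B)).comp A)) :=
        hA2.add hmid
      have hdecomp : ((1 : G₁ →L[ℝ] G₁) - (ContinuousLinearMap.adjoint A).comp A)
            + (ContinuousLinearMap.adjoint A).comp
              ((((1 : G₂ →L[ℝ] G₂) - (ContinuousLinearMap.adjoint B).comp B)).comp A)
          = 1 - P := by
        rw [hPdef, hCdef, ContinuousLinearMap.adjoint_comp]
        ext x
        simp only [ContinuousLinearMap.add_apply, ContinuousLinearMap.sub_apply,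
          ContinuousLinearMap.comp_apply, ContinuousLinearMap.one_apply, map_sub]
        abel
      have h1P : IsHilbertSchmidt ((1 : G₁ →L[ℝ] G₁) - P) := by
        rw [← hdecomp]; exact hsum
      have hunit : IsUnit ((1 : G₁ →L[ℝ] G₁) + S) := by
        refine ContinuousLinearMap.isUnit_of_forall_le_norm_inner_map _ (c := 1) one_pos ?_
        intro x
        have h1 := hSpos.2 x
        rw [ContinuousLinearMap.reApplyInnerSelf_apply] at h1
        simp only [RCLike.re_to_real] at h1
        have he : ⟪((1 : G₁ →L[ℝ] G₁) + S) x, x⟫_ℝ = ‖x‖ ^ 2 + ⟪S x, x⟫_ℝ := by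
          rw [ContinuousLinearMap.add_apply, inner_add_left, ContinuousLinearMap.one_apply,
            real_inner_self_eq_norm_sq]
        rw [Real.norm_eq_abs, he, abs_of_nonneg (by nlinarith [sq_nonneg ‖x‖])]
        simp only [NNReal.coe_one, mul_one]
        linarith
      obtain ⟨u, hu⟩ := hunit
      have hSfact : (ContinuousLinearMap.id ℝ G₁ - S)
          = ((u⁻¹ : (G₁ →L[ℝ] G₁)ˣ) : G₁ →L[ℝ] G₁).comp ((1 : G₁ →L[ℝ] G₁) - P) := by
        have h2 : ((1 : G₁ →L[ℝ] G₁) + S) * (1 - S) = 1 - P := by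
          have e : ((1 : G₁ →L[ℝ] G₁) + S) * (1 - S) = 1 - S * S := by noncomm_ring
          rw [e, hSsq]
        rw [← ContinuousLinearMap.mul_def]
        calc (ContinuousLinearMap.id ℝ G₁ - S) = (1 : G₁ →L[ℝ] G₁) - S := rfl
          _ = (((u⁻¹ : (G₁ →L[ℝ] G₁)ˣ) : G₁ →L[ℝ] G₁) * (u : G₁ →L[ℝ] G₁))
              * ((1 : G₁ →L[ℝ] G₁) - S) := by
            rw [Units.inv_mul, one_mul]
          _ = ((u⁻¹ : (G₁ →L[ℝ] G₁)ˣ) : G₁ →L[ℝ] G₁)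
              * (((u : G₁ →L[ℝ] G₁)) * ((1 : G₁ →L[ℝ] G₁) - S)) := by
            rw [mul_assoc]
          _ = ((u⁻¹ : (G₁ →L[ℝ] G₁)ˣ) : G₁ →L[ℝ] G₁) * ((1 : G₁ →L[ℝ] G₁) - P) := by
            rw [hu, h2]
      rw [hSfact]
      exact h1P.comp_left _

end
end

section
/- Let G₁ and G₂ be real Hilbert spaces and A : G₁ → G₂ a bounded invertible operator with bounded inverse. Then A ∈ S(G₁,G₂) if and only if A⁻¹ ∈ S(G₂,G₁). -/
open ContinuousLinearMap
open scoped InnerProductSpace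

noncomputable section

universe u v w

lemma summable_adjoint_of_summable {E F : Type*} [NormedAddCommGroup E] [InnerProductSpace ℝ E]
    [NormedAddCommGroup F] [InnerProductSpace ℝ F] [CompleteSpace E] [CompleteSpace F]
    (R : E →L[ℝ] F) {ι κ : Type*} (b : HilbertBasis ι ℝ E) (c : HilbertBasis κ ℝ F)
    (h : Summable fun i => ‖R (b i)‖ ^ 2) :
    Summable fun j => ‖(ContinuousLinearMap.adjoint R) (c j)‖ ^ 2 := by
  set f : ι × κ → ℝ := fun p => ⟪R (b p.1), c p.2⟫_ℝ ^ 2 with hf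
  have hf0 : 0 ≤ f := fun p => sq_nonneg _
  have hrow : ∀ i, HasSum (fun j => f (i, j)) (‖R (b i)‖ ^ 2) := by
    intro i
    have := c.hasSum_inner_mul_inner (R (b i)) (R (b i))
    simp only [real_inner_self_eq_norm_sq] at this
    convert this using 2 with j
    · rfl
    rw [hf]; dsimp only
    rw [sq, real_inner_comm (R (b i)) (c j)]
  have hsum : Summable f := by
    rw [summable_prod_of_nonneg hf0]
    exact ⟨fun i => (hrow i).summable, by
      simpa only [fun i => (hrow i).tsum_eq] using h⟩
  have hswap : Summable fun p : κ × ι => f p.swap := hsum.prod_symm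
  have hcol : ∀ j, HasSum (fun i => f (i, j)) (‖(ContinuousLinearMap.adjoint R) (c j)‖ ^ 2) := by
    intro j
    have := b.hasSum_inner_mul_inner ((ContinuousLinearMap.adjoint R) (c j))
      ((ContinuousLinearMap.adjoint R) (c j))
    simp only [real_inner_self_eq_norm_sq] at this
    convert this using 2 with i
    · rfl
    rw [hf]; dsimp only
    rw [sq, ← ContinuousLinearMap.adjoint_inner_right R]
    nth_rewrite 1 [real_inner_comm]
    rfl
  have := ((summable_prod_of_nonneg (fun p => hf0 p.swap)).mp hswap).2
  simpa only [Prod.swap_prod_mk, fun j => (hcol j).tsum_eq] using this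


set_option maxHeartbeats 1000000 in
lemma memS_inv_of_memS {G₁ : Type u} {G₂ : Type v}
    [NormedAddCommGroup G₁] [InnerProductSpace ℝ G₁] [CompleteSpace G₁]
    [NormedAddCommGroup G₂] [InnerProductSpace ℝ G₂] [CompleteSpace G₂]
    (A : G₁ →L[ℝ] G₂) (B : G₂ →L[ℝ] G₁)
    (hBA : B.comp A = ContinuousLinearMap.id ℝ G₁)
    (hAB : A.comp B = ContinuousLinearMap.id ℝ G₂)
    (hA : MemS A) : MemS B := by
  obtain ⟨-, S, hSpos, hSS, ι, b, hb⟩ := hA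
  have hS_sa : ContinuousLinearMap.adjoint S = S := isSelfAdjoint_iff'.mp hSpos.isSelfAdjoint
  -- pointwise basics
  have hABx : ∀ x, A (B x) = x := fun x => by simpa using DFunLike.congr_fun hAB x
  have hBAx : ∀ x, B (A x) = x := fun x => by simpa using DFunLike.congr_fun hBA x
  have hAsA : ∀ x, (ContinuousLinearMap.adjoint A) (A x) = S (S x) := fun x => by
    simpa using (DFunLike.congr_fun hSS x).symm
  have hBsAs : ∀ x, (ContinuousLinearMap.adjoint B) ((ContinuousLinearMap.adjoint A) x) = x := by
    have h1 : (ContinuousLinearMap.adjoint B).comp (ContinuousLinearMap.adjoint A)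
        = ContinuousLinearMap.id ℝ G₂ := by
      rw [← adjoint_comp, hAB, adjoint_id]
    intro x; simpa using DFunLike.congr_fun h1 x
  have hAsBs : ∀ x, (ContinuousLinearMap.adjoint A) ((ContinuousLinearMap.adjoint B) x) = x := by
    have h1 : (ContinuousLinearMap.adjoint A).comp (ContinuousLinearMap.adjoint B)
        = ContinuousLinearMap.id ℝ G₁ := by
      rw [← adjoint_comp, hBA, adjoint_id]
    intro x; simpa using DFunLike.congr_fun h1 x
  have hPPinvx : ∀ x, (ContinuousLinearMap.adjoint A) (A (B ((ContinuousLinearMap.adjoint B) x)))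
      = x := fun x => by rw [hABx, hAsBs]
  have hSPx : ∀ y, S ((ContinuousLinearMap.adjoint A) (A y))
      = (ContinuousLinearMap.adjoint A) (A (S y)) := fun y => by rw [hAsA, hAsA]
  -- the commutation
  have hPinvSx : ∀ x, B ((ContinuousLinearMap.adjoint B) (S x))
      = S (B ((ContinuousLinearMap.adjoint B) x)) := by
    intro x
    calc B ((ContinuousLinearMap.adjoint B) (S x))
        = B ((ContinuousLinearMap.adjoint B) (S ((ContinuousLinearMap.adjoint A)
            (A (B ((ContinuousLinearMap.adjoint B) x)))))) := by
          conv_lhs => rw [← hPPinvx x]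
      _ = B ((ContinuousLinearMap.adjoint B) ((ContinuousLinearMap.adjoint A)
            (A (S (B ((ContinuousLinearMap.adjoint B) x)))))) := by rw [hSPx]
      _ = B (A (S (B ((ContinuousLinearMap.adjoint B) x)))) := by rw [hBsAs]
      _ = S (B ((ContinuousLinearMap.adjoint B) x)) := by rw [hBAx]
  set Q : G₁ →L[ℝ] G₁ := S.comp (B.comp (ContinuousLinearMap.adjoint B)) with hQdef
  have hQx : ∀ x, Q x = S (B ((ContinuousLinearMap.adjoint B) x)) := fun x => rfl
  have hQSx : ∀ x, Q (S x) = x := by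
    intro x
    rw [hQx, hPinvSx, ← hAsA, hABx, hAsBs]
  have hSQx : ∀ x, S (Q x) = x := by
    intro x
    rw [hQx, ← hAsA, hABx, hAsBs]
  have hQQx : ∀ x, Q (Q x) = B ((ContinuousLinearMap.adjoint B) x) := by
    intro x
    rw [hQx, hQx, hPinvSx, ← hAsA, hABx, hAsBs]
  -- self-adjointness of Q
  have hQ_sa : ContinuousLinearMap.adjoint Q = Q := by
    rw [hQdef, adjoint_comp, adjoint_comp, adjoint_adjoint, hS_sa]
    ext x
    exact hPinvSx x
  have hQinner : ∀ u v, ⟪Q u, v⟫_ℝ = ⟪u, Q v⟫_ℝ := by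
    intro u v
    conv_lhs => rw [← hQ_sa]
    exact ContinuousLinearMap.adjoint_inner_left Q v u
  have hQpos : Q.IsPositive := by
    refine ⟨(isSelfAdjoint_iff'.mpr hQ_sa).isSymmetric, fun x => ?_⟩
    have h1 : Q.reApplyInnerSelf x = S.reApplyInnerSelf (Q x) := by
      simp only [ContinuousLinearMap.reApplyInnerSelf_apply]
      congr 1
      conv_lhs => rw [show x = S (Q x) from (hSQx x).symm]
      rw [hQSx, real_inner_comm]
    rw [h1]; exact hSpos.2 _
  -- the operator T
  set T : G₂ →L[ℝ] G₂ :=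
    A.comp (Q.comp (Q.comp (Q.comp (ContinuousLinearMap.adjoint A)))) with hTdef
  have hTx : ∀ x, T x = A (Q (Q (Q ((ContinuousLinearMap.adjoint A) x)))) := fun x => rfl
  have hT_sa : ContinuousLinearMap.adjoint T = T := by
    rw [hTdef]
    simp only [adjoint_comp, adjoint_adjoint, hQ_sa]
    ext x
    simp [comp_apply]
  refine ⟨⟨A, hAB, hBA⟩, T, ⟨(isSelfAdjoint_iff'.mpr hT_sa).isSymmetric, fun x => ?pos⟩, ?sq, ?hs⟩
  case pos =>
    have h1 : T.reApplyInnerSelf x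
        = Q.reApplyInnerSelf (Q ((ContinuousLinearMap.adjoint A) x)) := by
      simp only [ContinuousLinearMap.reApplyInnerSelf_apply]
      congr 1
      rw [hTx, ← ContinuousLinearMap.adjoint_inner_right A,
        hQinner (Q (Q ((ContinuousLinearMap.adjoint A) x))) ((ContinuousLinearMap.adjoint A) x)]
    rw [h1]; exact hQpos.2 _
  case sq =>
    ext x
    simp only [comp_apply, hTx]
    simp only [hAsA, hSQx, hQSx, hQQx, hABx, hBAx, hAsBs, hBsAs]
  case hs =>
    obtain ⟨w, c, -⟩ := exists_hilbertBasis ℝ G₂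
    set R : G₁ →L[ℝ] G₂ := (ContinuousLinearMap.id ℝ G₂ - T).comp (A.comp Q) with hRdef
    have hRx : ∀ x, R x = (A.comp (Q.comp Q)) (S x - x) := by
      intro x
      simp only [hRdef, comp_apply, sub_apply, ContinuousLinearMap.id_apply, hTx, map_sub]
      simp only [hAsA, hSQx, hQSx]
    have hC : ∀ x, ‖R x‖ ^ 2 ≤ ‖A.comp (Q.comp Q)‖ ^ 2
        * ‖(ContinuousLinearMap.id ℝ G₁ - S) x‖ ^ 2 := by
      intro x
      rw [hRx, ← mul_pow]
      apply pow_le_pow_left₀ (norm_nonneg _)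
      calc ‖(A.comp (Q.comp Q)) (S x - x)‖ ≤ ‖A.comp (Q.comp Q)‖ * ‖S x - x‖ :=
            le_opNorm _ _
        _ = ‖A.comp (Q.comp Q)‖ * ‖(ContinuousLinearMap.id ℝ G₁ - S) x‖ := by
            rw [norm_sub_rev]; simp [sub_apply]
    have hRb : Summable fun i => ‖R (b i)‖ ^ 2 := by
      apply Summable.of_nonneg_of_le (fun i => sq_nonneg _) (fun i => hC (b i))
      exact hb.mul_left _
    have hsum2 := summable_adjoint_of_summable R b c hRb
    have hRadj : ContinuousLinearMap.adjoint R
        = (Q.comp (ContinuousLinearMap.adjoint A)).comp (ContinuousLinearMap.id ℝ G₂ - T) := by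
      have hid_sa : IsSelfAdjoint (ContinuousLinearMap.id ℝ G₂) := by
        rw [← ContinuousLinearMap.one_def]; exact IsSelfAdjoint.one _
      have hT1 : ContinuousLinearMap.adjoint (ContinuousLinearMap.id ℝ G₂ - T)
          = ContinuousLinearMap.id ℝ G₂ - T :=
        isSelfAdjoint_iff'.mp (hid_sa.sub (isSelfAdjoint_iff'.mpr hT_sa))
      rw [hRdef, adjoint_comp, adjoint_comp, hQ_sa, hT1]
    have hiso : ∀ z : G₂, ‖Q ((ContinuousLinearMap.adjoint A) z)‖ ^ 2 = ‖z‖ ^ 2 := by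
      intro z
      rw [← real_inner_self_eq_norm_sq, ← real_inner_self_eq_norm_sq]
      rw [hQinner, ContinuousLinearMap.adjoint_inner_left, hQQx, hBsAs, hABx]
    have hkey : ∀ j : w, ‖(ContinuousLinearMap.adjoint R) (c j)‖ ^ 2
        = ‖(ContinuousLinearMap.id ℝ G₂ - T) (c j)‖ ^ 2 := by
      intro j
      rw [hRadj]
      simp only [comp_apply]
      exact hiso _
    exact ⟨w, c, hsum2.congr hkey⟩

theorem memS_iff_memS_inv {G₁ : Type u} {G₂ : Type v}
    [NormedAddCommGroup G₁] [InnerProductSpace ℝ G₁] [CompleteSpace G₁]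
    [NormedAddCommGroup G₂] [InnerProductSpace ℝ G₂] [CompleteSpace G₂]
    (A : G₁ →L[ℝ] G₂) (B : G₂ →L[ℝ] G₁)
    (hBA : B.comp A = ContinuousLinearMap.id ℝ G₁)
    (hAB : A.comp B = ContinuousLinearMap.id ℝ G₂) :
    MemS A ↔ MemS B :=
  ⟨fun h => memS_inv_of_memS A B hBA hAB h, fun h => memS_inv_of_memS B A hAB hBA h⟩

end
end

section
/- Let G₁ and G₂ be real Hilbert spaces and A ∈ S(G₁,G₂). Then A*A ∈ S(G₁) (i.e. A*A is positive, invertible, and 1 − A*A is Hilbert–Schmidt) and the operator (A*)⁻¹ belongs to S(G₁,G₂). -/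
open ContinuousLinearMap
open scoped InnerProductSpace

noncomputable section

universe u v w

/-- Hilbert–Schmidt operators are stable under left composition with a bounded operator. -/
lemma IsHilbertSchmidt.comp_left_s3 {E : Type u} {F : Type v} {F' : Type w}
    [NormedAddCommGroup E] [InnerProductSpace ℝ E]
    [NormedAddCommGroup F] [InnerProductSpace ℝ F]
    [NormedAddCommGroup F'] [InnerProductSpace ℝ F']
    {T : E →L[ℝ] F} (hT : IsHilbertSchmidt T) (B : F →L[ℝ] F') :
    IsHilbertSchmidt (B.comp T) := by
  obtain ⟨ι, b, hb⟩ := hT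
  refine ⟨ι, b, ?_⟩
  refine Summable.of_nonneg_of_le (fun i => by positivity) (fun i => ?_)
    (hb.mul_left (‖B‖ ^ 2))
  have h1 : ‖(B.comp T) (b i)‖ ≤ ‖B‖ * ‖T (b i)‖ := by
    simpa using B.le_opNorm (T (b i))
  calc ‖(B.comp T) (b i)‖ ^ 2 ≤ (‖B‖ * ‖T (b i)‖) ^ 2 := by
        exact pow_le_pow_left₀ (norm_nonneg _) h1 2
    _ = ‖B‖ ^ 2 * ‖T (b i)‖ ^ 2 := by ring

/-- Hilbert–Schmidt is preserved under pointwise-equal-norm replacement. -/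
lemma IsHilbertSchmidt.congr_fun {E : Type u} {F : Type v}
    [NormedAddCommGroup E] [InnerProductSpace ℝ E]
    [NormedAddCommGroup F] [InnerProductSpace ℝ F]
    {T T' : E →L[ℝ] F} (hT : IsHilbertSchmidt T) (h : ∀ x, T' x = T x) :
    IsHilbertSchmidt T' := by
  obtain ⟨ι, b, hb⟩ := hT
  exact ⟨ι, b, by simpa only [h] using hb⟩

theorem memSG_adjoint_comp_and_memS_adjoint_inv {G₁ : Type u} {G₂ : Type v}
    [NormedAddCommGroup G₁] [InnerProductSpace ℝ G₁] [CompleteSpace G₁]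
    [NormedAddCommGroup G₂] [InnerProductSpace ℝ G₂] [CompleteSpace G₂]
    (A : G₁ →L[ℝ] G₂) (hA : MemS A) :
    MemSG ((ContinuousLinearMap.adjoint A).comp A) ∧
      ∃ C : G₁ →L[ℝ] G₂,
        C.comp (ContinuousLinearMap.adjoint A) = ContinuousLinearMap.id ℝ G₂ ∧
        (ContinuousLinearMap.adjoint A).comp C = ContinuousLinearMap.id ℝ G₁ ∧
        MemS C := by
  classical
  obtain ⟨⟨B, hBA, hAB⟩, S, hSpos, hSS, hHS⟩ := hA
  have hABx : ∀ x, A (B x) = x := fun x =>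
    congrArg (fun f => f x) hAB
  have hBAx : ∀ x, B (A x) = x := fun x =>
    congrArg (fun f => f x) hBA
  -- adjoint inverse identities
  have hadj1 : (ContinuousLinearMap.adjoint A).comp (ContinuousLinearMap.adjoint B) =
      ContinuousLinearMap.id ℝ G₁ := by
    rw [← ContinuousLinearMap.adjoint_comp, hBA, ContinuousLinearMap.adjoint_id]
  have hadj2 : (ContinuousLinearMap.adjoint B).comp (ContinuousLinearMap.adjoint A) =
      ContinuousLinearMap.id ℝ G₂ := by
    rw [← ContinuousLinearMap.adjoint_comp, hAB, ContinuousLinearMap.adjoint_id]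
  have hadj1x : ∀ x, ContinuousLinearMap.adjoint A (ContinuousLinearMap.adjoint B x) = x :=
    fun x => congrArg (fun f => f x) hadj1
  have hadj2x : ∀ x, ContinuousLinearMap.adjoint B (ContinuousLinearMap.adjoint A x) = x :=
    fun x => congrArg (fun f => f x) hadj2
  have hSSx : ∀ x, S (S x) = ContinuousLinearMap.adjoint A (A x) := fun x =>
    congrArg (fun f => f x) hSS
  -- S is symmetric
  have hSsymm : ∀ x y : G₁, ⟪S x, y⟫_ℝ = ⟪x, S y⟫_ℝ := fun x y =>
    ((ContinuousLinearMap.isSelfAdjoint_iff_isSymmetric.mp hSpos.isSelfAdjoint) x y)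
  -- ‖S x‖ = ‖A x‖
  have hSnorm : ∀ x, ‖S x‖ = ‖A x‖ := by
    intro x
    have h2 : ‖S x‖ ^ 2 = ‖A x‖ ^ 2 := by
      rw [← real_inner_self_eq_norm_sq, ← real_inner_self_eq_norm_sq]
      calc ⟪S x, S x⟫_ℝ = ⟪x, S (S x)⟫_ℝ := hSsymm x (S x)
        _ = ⟪x, ContinuousLinearMap.adjoint A (A x)⟫_ℝ := by rw [hSSx]
        _ = ⟪A x, A x⟫_ℝ := ContinuousLinearMap.adjoint_inner_right A x (A x)
    have := congrArg Real.sqrt h2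
    simpa [Real.sqrt_sq, norm_nonneg] using this
  -- S is bounded below
  have hSbdd : ∀ x, ‖x‖ ≤ ‖B‖₊ * ‖S x‖ := by
    intro x
    calc ‖x‖ = ‖B (A x)‖ := by rw [hBAx]
      _ ≤ ‖B‖ * ‖A x‖ := B.le_opNorm (A x)
      _ = ‖B‖₊ * ‖S x‖ := by rw [hSnorm]; rfl
  have hSanti : AntilipschitzWith ‖B‖₊ S := S.antilipschitz_of_bound hSbdd
  have hSinj : Function.Injective S := hSanti.injective
  have hSker : LinearMap.ker (S : G₁ →ₗ[ℝ] G₁) = ⊥ := LinearMap.ker_eq_bot.mpr hSinj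
  -- S has closed range
  have hSclosed : IsClosed (LinearMap.range (S : G₁ →ₗ[ℝ] G₁) : Set G₁) := by
    rw [LinearMap.coe_range]; exact (hSanti.isClosedEmbedding S.uniformContinuous).isClosed_range
  haveI : CompleteSpace (LinearMap.range (S : G₁ →ₗ[ℝ] G₁) : Submodule ℝ G₁) :=
    hSclosed.completeSpace_coe
  -- S is surjective
  have hSrange : LinearMap.range (S : G₁ →ₗ[ℝ] G₁) = ⊤ := by
    rw [← Submodule.orthogonal_eq_bot_iff]
    rw [Submodule.eq_bot_iff]
    intro y hy
    have hy' : ∀ x : G₁, ⟪S x, y⟫_ℝ = 0 := fun x =>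
      hy (S x) (LinearMap.mem_range_self _ x)
    have hSy : S y = 0 := by
      have : ⟪S y, S y⟫_ℝ = 0 := by
        rw [← hSsymm]
        exact hy' (S y)
      exact inner_self_eq_zero.mp this
    have : y = 0 := by
      apply hSinj
      simpa using hSy
    exact this
  -- the inverse of S
  set Se : G₁ ≃L[ℝ] G₁ := ContinuousLinearEquiv.ofBijective S hSker hSrange with hSe
  set T : G₁ →L[ℝ] G₁ := (Se.symm : G₁ →L[ℝ] G₁) with hTdef
  have hSex : ∀ x, Se x = S x := fun x => rfl
  have hTS : ∀ x, T (S x) = x := fun x => Se.symm_apply_apply x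
  have hST : ∀ x, S (T x) = x := fun x => Se.apply_symm_apply x
  -- T is symmetric
  have hTsymm : ∀ x y : G₁, ⟪T x, y⟫_ℝ = ⟪x, T y⟫_ℝ := by
    intro x y
    calc ⟪T x, y⟫_ℝ = ⟪T x, S (T y)⟫_ℝ := by rw [hST]
      _ = ⟪S (T x), T y⟫_ℝ := (hSsymm (T x) (T y)).symm
      _ = ⟪x, T y⟫_ℝ := by rw [hST]
  have hTsa : IsSelfAdjoint T :=
    ContinuousLinearMap.isSelfAdjoint_iff_isSymmetric.mpr (fun x y => hTsymm x y)
  -- T is positive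
  have hTpos : T.IsPositive := by
    refine ⟨fun x y => hTsymm x y, fun x => ?_⟩
    have h1 : T.reApplyInnerSelf x = ⟪T x, x⟫_ℝ := rfl
    rw [h1]
    have h2 : (0:ℝ) ≤ ⟪S (T x), T x⟫_ℝ := by
      simpa [ContinuousLinearMap.reApplyInnerSelf] using hSpos.2 (T x)
    rw [hST x, real_inner_comm] at h2
    exact h2
  refine ⟨?_, ?_⟩
  · -- MemSG (A† ∘ A)
    refine ⟨?_, ?_, ?_⟩
    · -- positivity
      have := (ContinuousLinearMap.isPositive_one
        (E := G₂) (𝕜 := ℝ)).adjoint_conj A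
      simpa [ContinuousLinearMap.one_def] using this
    · -- bounded invertibility, inverse is B ∘ B†
      refine ⟨B.comp (ContinuousLinearMap.adjoint B), ?_, ?_⟩
      · ext x
        simp only [ContinuousLinearMap.comp_apply, ContinuousLinearMap.coe_id', id_eq,
          ContinuousLinearMap.id_apply]
        rw [hadj2x, hBAx]
      · ext x
        simp only [ContinuousLinearMap.comp_apply, ContinuousLinearMap.coe_id', id_eq,
          ContinuousLinearMap.id_apply]
        rw [hABx, hadj1x]
    · -- 1 - A†A is Hilbert–Schmidt
      refine (hHS.comp_left_s3 (ContinuousLinearMap.id ℝ G₁ + S)).congr_fun ?_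
      intro x
      simp only [ContinuousLinearMap.comp_apply, ContinuousLinearMap.sub_apply,
        ContinuousLinearMap.add_apply, ContinuousLinearMap.id_apply, map_sub]
      rw [hSSx]
      abel
  · -- the operator C = B†
    refine ⟨ContinuousLinearMap.adjoint B, hadj2, hadj1, ⟨ContinuousLinearMap.adjoint A,
      hadj1, hadj2⟩, T, hTpos, ?_, ?_⟩
    · -- T ∘ T = (B†)† ∘ B† = B ∘ B†
      rw [ContinuousLinearMap.adjoint_adjoint]
      ext x
      simp only [ContinuousLinearMap.comp_apply]
      apply hSinj
      apply hSinj
      rw [hST, hST, hSSx, hABx, hadj1x]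
    · -- 1 - T is Hilbert–Schmidt
      refine (hHS.comp_left_s3 (-T)).congr_fun ?_
      intro x
      simp only [ContinuousLinearMap.comp_apply, ContinuousLinearMap.sub_apply,
        ContinuousLinearMap.neg_apply, ContinuousLinearMap.id_apply, map_sub, neg_sub]
      rw [hTS]
      abel

end
end

section
/- Let G₁ and G₂ be real Hilbert spaces, A ∈ S(G₁,G₂), and let G₁′ be a closed subspace of G₁. Then G₂′ := A(G₁′) is a closed subspace of G₂, and the restriction A|_{G₁′} : G₁′ → G₂′ belongs to S(G₁′, G₂′). -/
open ContinuousLinearMap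
open scoped InnerProductSpace

noncomputable section

universe u v w

lemma sym_bound' {E : Type*} [NormedAddCommGroup E] [InnerProductSpace ℝ E]
    (a : E →L[ℝ] E) (hsym : ∀ x y, ⟪a x, y⟫_ℝ = ⟪x, a y⟫_ℝ) {q : ℝ}
    (h : ∀ x, |⟪a x, x⟫_ℝ| ≤ q * ‖x‖ ^ 2) (x : E) : ‖a x‖ ≤ q * ‖x‖ := by
  have key : ∀ u v : E, ⟪a u, v⟫_ℝ ≤ (q / 2) * (‖u‖ ^ 2 + ‖v‖ ^ 2) := by
    intro u v
    have pol : 4 * ⟪a u, v⟫_ℝ = ⟪a (u + v), u + v⟫_ℝ - ⟪a (u - v), u - v⟫_ℝ := by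
      have h1 : ⟪a v, u⟫_ℝ = ⟪a u, v⟫_ℝ := by rw [hsym v u, real_inner_comm]
      simp only [map_add, map_sub, inner_add_left, inner_add_right, inner_sub_left,
        inner_sub_right]
      linarith [h1]
    have par : ‖u + v‖ ^ 2 + ‖u - v‖ ^ 2 = 2 * (‖u‖ ^ 2 + ‖v‖ ^ 2) := by
      have := parallelogram_law_with_norm ℝ u v
      nlinarith [this]
    have hq2 : q * ‖u + v‖ ^ 2 + q * ‖u - v‖ ^ 2 = 2 * q * (‖u‖ ^ 2 + ‖v‖ ^ 2) := by
      rw [← mul_add, par]; ring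
    linarith [pol, (abs_le.mp (h (u + v))).2, (abs_le.mp (h (u - v))).1, hq2]
  rcases eq_or_ne x 0 with rfl | hx
  · simp
  have hxpos : 0 < ‖x‖ := norm_pos_iff.mpr hx
  rcases eq_or_ne (a x) 0 with h0 | h0
  · have hq : 0 ≤ q := by
      have hh := h x
      rw [h0] at hh
      simp only [inner_zero_left, abs_zero] at hh
      exact nonneg_of_mul_nonneg_right (by linarith : (0:ℝ) ≤ ‖x‖ ^ 2 * q) (pow_pos hxpos 2)
    rw [h0, norm_zero]; positivity
  · have hax : 0 < ‖a x‖ := norm_pos_iff.mpr h0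
    have hk := key x ((‖x‖ / ‖a x‖) • a x)
    rw [inner_smul_right] at hk
    have hinner : ⟪a x, a x⟫_ℝ = ‖a x‖ ^ 2 := real_inner_self_eq_norm_sq _
    rw [hinner, norm_smul] at hk
    have habs : ‖(‖x‖ / ‖a x‖)‖ = ‖x‖ / ‖a x‖ := by
      rw [Real.norm_eq_abs, abs_of_nonneg (by positivity)]
    rw [habs] at hk
    have hsimp : ‖x‖ / ‖a x‖ * ‖a x‖ ^ 2 = ‖x‖ * ‖a x‖ := by field_simp
    have hsimp2 : (‖x‖ / ‖a x‖ * ‖a x‖) ^ 2 = ‖x‖ ^ 2 := by field_simp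
    rw [hsimp, hsimp2] at hk
    nlinarith

-- Parseval in ENNReal form
lemma parseval_ennreal {ι E : Type*} [NormedAddCommGroup E] [InnerProductSpace ℝ E]
    (b : HilbertBasis ι ℝ E) (x : E) :
    ∑' i, ENNReal.ofReal (⟪b i, x⟫_ℝ ^ 2) = ENNReal.ofReal (‖x‖ ^ 2) := by
  have h := b.hasSum_inner_mul_inner x x
  have h2 : HasSum (fun i => ⟪b i, x⟫_ℝ ^ 2) (‖x‖ ^ 2) := by
    have e : (fun i => ⟪b i, x⟫_ℝ ^ 2) = fun i => ⟪x, b i⟫_ℝ * ⟪b i, x⟫_ℝ := by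
      funext i; rw [real_inner_comm (b i) x]; ring
    rw [e, ← real_inner_self_eq_norm_sq]; exact h
  rw [← h2.tsum_eq]
  exact (ENNReal.ofReal_tsum_of_nonneg (fun i => sq_nonneg _) h2.summable).symm

-- Bessel in ENNReal form
lemma bessel_ennreal {J E : Type*} [NormedAddCommGroup E] [InnerProductSpace ℝ E]
    {v : J → E} (hv : Orthonormal ℝ v) (x : E) :
    ∑' j, ENNReal.ofReal (⟪v j, x⟫_ℝ ^ 2) ≤ ENNReal.ofReal (‖x‖ ^ 2) := by
  have hs : Summable fun j => ⟪v j, x⟫_ℝ ^ 2 := by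
    have := hv.inner_products_summable x
    refine this.congr fun j => ?_
    rw [Real.norm_eq_abs, sq_abs]
  have hle : ∑' j, ⟪v j, x⟫_ℝ ^ 2 ≤ ‖x‖ ^ 2 := by
    have := hv.tsum_inner_products_le x
    calc ∑' j, ⟪v j, x⟫_ℝ ^ 2 = ∑' j, ‖⟪v j, x⟫_ℝ‖ ^ 2 := by
          congr 1; ext j; rw [Real.norm_eq_abs, sq_abs]
      _ ≤ ‖x‖ ^ 2 := this
  rw [← ENNReal.ofReal_tsum_of_nonneg (fun j => sq_nonneg _) hs]
  exact ENNReal.ofReal_le_ofReal hle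

/-- If `T` is HS w.r.t. some Hilbert basis, then `∑ ‖T (v j)‖²` converges for every
orthonormal family `v`. -/
lemma hs_transfer {ι J E : Type*} [NormedAddCommGroup E] [InnerProductSpace ℝ E]
    [CompleteSpace E] (T : E →L[ℝ] E) (b : HilbertBasis ι ℝ E)
    (hb : Summable fun i => ‖T (b i)‖ ^ 2) {v : J → E} (hv : Orthonormal ℝ v) :
    Summable fun j => ‖T (v j)‖ ^ 2 := by
  have key : ∑' j, ENNReal.ofReal (‖T (v j)‖ ^ 2) ≠ ⊤ := by
    have c1 : ∑' j, ENNReal.ofReal (‖T (v j)‖ ^ 2)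
        = ∑' j, ∑' i, ENNReal.ofReal (⟪adjoint T (b i), v j⟫_ℝ ^ 2) := by
      congr 1; ext j
      rw [← parseval_ennreal b (T (v j))]
      congr 1; ext i
      rw [adjoint_inner_left, real_inner_comm]
    have c2 : ∑' j, ∑' i, ENNReal.ofReal (⟪adjoint T (b i), v j⟫_ℝ ^ 2)
        = ∑' i, ∑' j, ENNReal.ofReal (⟪v j, adjoint T (b i)⟫_ℝ ^ 2) := by
      rw [ENNReal.tsum_comm]
      congr 1; ext i; congr 1; ext j; rw [real_inner_comm]
    have c3 : ∑' i, ∑' j, ENNReal.ofReal (⟪v j, adjoint T (b i)⟫_ℝ ^ 2)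
        ≤ ∑' i, ENNReal.ofReal (‖adjoint T (b i)‖ ^ 2) :=
      ENNReal.tsum_le_tsum fun i => bessel_ennreal hv _
    have c4 : ∑' i, ENNReal.ofReal (‖adjoint T (b i)‖ ^ 2)
        = ∑' i', ENNReal.ofReal (‖T (b i')‖ ^ 2) := by
      calc ∑' i, ENNReal.ofReal (‖adjoint T (b i)‖ ^ 2)
          = ∑' i, ∑' i', ENNReal.ofReal (⟪b i', adjoint T (b i)⟫_ℝ ^ 2) := by
            congr 1; ext i; rw [parseval_ennreal b]
        _ = ∑' i', ∑' i, ENNReal.ofReal (⟪b i, T (b i')⟫_ℝ ^ 2) := by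
            rw [ENNReal.tsum_comm]
            congr 1; ext i'; congr 1; ext i
            rw [adjoint_inner_right, real_inner_comm]
        _ = ∑' i', ENNReal.ofReal (‖T (b i')‖ ^ 2) := by
            congr 1; ext i'; rw [parseval_ennreal b]
    have c5 : ∑' i', ENNReal.ofReal (‖T (b i')‖ ^ 2) ≠ ⊤ := by
      rw [ENNReal.ofReal_tsum_of_nonneg (fun i => sq_nonneg _) hb |>.symm]
      exact ENNReal.ofReal_ne_top
    rw [c1, c2]
    exact ne_top_of_le_ne_top (c4 ▸ c5) c3
  have : Summable fun j => (‖T (v j)‖ ^ 2).toNNReal := by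
    rw [← ENNReal.tsum_coe_ne_top_iff_summable]
    exact key
  refine (NNReal.summable_coe.mpr this).congr fun j => ?_
  rw [Real.coe_toNNReal _ (sq_nonneg _)]

section FP
variable {E : Type*} [NormedAddCommGroup E] [InnerProductSpace ℝ E] [CompleteSpace E]

/-- Fixed point in a Banach algebra: for `‖a‖ ≤ q < 1` there is `y` with
`y = 2⁻¹ • (a + y * y)`, `‖y‖ ≤ 1 - √(1-q)`, and `y` in any closed subset
preserved by the iteration and containing `0`. -/
lemma exists_fp' (a : E →L[ℝ] E) {q : ℝ} (hq0 : 0 ≤ q) (hq1 : q < 1) (haop : ‖a‖ ≤ q)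
    (P : Set (E →L[ℝ] E)) (hPcl : IsClosed P) (hP0 : (0 : E →L[ℝ] E) ∈ P)
    (hPstep : ∀ y ∈ P, (2:ℝ)⁻¹ • (a + y * y) ∈ P) :
    ∃ y : E →L[ℝ] E, (2:ℝ)⁻¹ • (a + y * y) = y ∧ ‖y‖ ≤ 1 - Real.sqrt (1 - q) ∧ y ∈ P := by
  set r : ℝ := 1 - Real.sqrt (1 - q) with hrdef
  have h1q : (0:ℝ) ≤ 1 - q := by linarith
  have hsq : Real.sqrt (1 - q) ^ 2 = 1 - q := Real.sq_sqrt h1q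
  have hr0 : 0 ≤ r := by
    have h : Real.sqrt (1 - q) ≤ Real.sqrt 1 := Real.sqrt_le_sqrt (by linarith)
    rw [Real.sqrt_one] at h
    simp only [hrdef]; linarith
  have hr1 : r < 1 := by
    have h : 0 < Real.sqrt (1 - q) := Real.sqrt_pos.mpr (by linarith)
    simp only [hrdef]; linarith
  have hqr : q + r ^ 2 = 2 * r := by nlinarith [hsq]
  set X : Set (E →L[ℝ] E) := {y | ‖y‖ ≤ r} with hX
  have hXclosed : IsClosed X := isClosed_le continuous_norm continuous_const
  haveI : CompleteSpace X := hXclosed.completeSpace_coe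
  haveI : Nonempty X := ⟨⟨0, by simp [hX, hr0]⟩⟩
  have hmem : ∀ y : E →L[ℝ] E, ‖y‖ ≤ r → ‖(2:ℝ)⁻¹ • (a + y * y)‖ ≤ r := by
    intro y hyr
    have h1 : ‖a + y * y‖ ≤ q + r ^ 2 := by
      refine (norm_add_le _ _).trans (add_le_add haop ?_)
      refine (norm_mul_le y y).trans ?_
      calc ‖y‖ * ‖y‖ ≤ r * r := mul_le_mul hyr hyr (norm_nonneg _) hr0
        _ = r ^ 2 := by ring
    have hns := norm_smul ((2:ℝ)⁻¹) (a + y * y)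
    rw [hns, show ‖(2:ℝ)⁻¹‖ = 2⁻¹ by norm_num]
    nlinarith
  let Φ : X → X := fun y => ⟨(2:ℝ)⁻¹ • (a + y.1 * y.1), hmem y.1 y.2⟩
  have hΦval : ∀ y : X, (Φ y).1 = (2:ℝ)⁻¹ • (a + y.1 * y.1) := fun _ => rfl
  have hcontr : ContractingWith ⟨r, hr0⟩ Φ := by
    constructor
    · exact_mod_cast hr1
    · refine LipschitzWith.of_dist_le_mul fun y z => ?_
      rw [Subtype.dist_eq, Subtype.dist_eq, dist_eq_norm, dist_eq_norm, hΦval, hΦval]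
      have hyz : y.1 * y.1 - z.1 * z.1 = y.1 * (y.1 - z.1) + (y.1 - z.1) * z.1 := by
        simp only [mul_sub, sub_mul]; abel
      have heq : (2:ℝ)⁻¹ • (a + y.1 * y.1) - (2:ℝ)⁻¹ • (a + z.1 * z.1)
          = (2:ℝ)⁻¹ • (y.1 * (y.1 - z.1) + (y.1 - z.1) * z.1) := by
        rw [← smul_sub, ← hyz]
        congr 1
        abel
      rw [heq]
      have hns := norm_smul ((2:ℝ)⁻¹) (y.1 * (y.1 - z.1) + (y.1 - z.1) * z.1)
      rw [hns, show ‖(2:ℝ)⁻¹‖ = 2⁻¹ by norm_num]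
      have hb : ‖y.1 * (y.1 - z.1) + (y.1 - z.1) * z.1‖ ≤ 2 * r * ‖y.1 - z.1‖ := by
        refine (norm_add_le _ _).trans ?_
        have h1 := norm_mul_le y.1 (y.1 - z.1)
        have h2 := norm_mul_le (y.1 - z.1) z.1
        have hy := y.2; have hz := z.2
        have hnn : (0:ℝ) ≤ ‖y.1 - z.1‖ := norm_nonneg _
        simp only [hX, Set.mem_setOf_eq] at hy hz
        nlinarith
      calc (2:ℝ)⁻¹ * ‖y.1 * (y.1 - z.1) + (y.1 - z.1) * z.1‖
          ≤ 2⁻¹ * (2 * r * ‖y.1 - z.1‖) := by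
            exact mul_le_mul_of_nonneg_left hb (by norm_num)
        _ = r * ‖y.1 - z.1‖ := by ring
        _ = (⟨r, hr0⟩ : NNReal) * ‖y.1 - z.1‖ := rfl
  set yfix : X := hcontr.fixedPoint Φ with hyfix
  have hfix : Φ yfix = yfix := hcontr.fixedPoint_isFixedPt
  refine ⟨yfix.1, ?_, yfix.2, ?_⟩
  · conv_rhs => rw [← hfix]
  · -- `yfix ∈ P` since `P` is preserved by the iteration and closed
    have hiter : ∀ n : ℕ, (Φ^[n] ⟨0, by simp [hX, hr0]⟩).1 ∈ P := by
      intro n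
      induction n with
      | zero => simpa using hP0
      | succ k ih =>
        rw [Function.iterate_succ_apply', hΦval]
        exact hPstep _ ih
    have htend := hcontr.tendsto_iterate_fixedPoint (⟨0, by simp [hX, hr0]⟩ : X)
    have htend' : Filter.Tendsto (fun n => (Φ^[n] ⟨0, by simp [hX, hr0]⟩).1)
        Filter.atTop (nhds yfix.1) :=
      (continuous_subtype_val.tendsto _).comp htend
    exact hPcl.mem_of_tendsto htend' (Filter.Eventually.of_forall hiter)

end FP

set_option maxHeartbeats 1000000 in
set_option synthInstance.maxHeartbeats 200000 in
lemma exists_sqrt_s4 {E : Type*} [NormedAddCommGroup E] [InnerProductSpace ℝ E] [CompleteSpace E]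
    (T : E →L[ℝ] E) (hsa : ∀ u v, ⟪T u, v⟫_ℝ = ⟪u, T v⟫_ℝ) {m M : ℝ} (hm : 0 < m)
    (hlow : ∀ x, m * ‖x‖ ^ 2 ≤ ⟪T x, x⟫_ℝ) (hup : ∀ x, ⟪T x, x⟫_ℝ ≤ M * ‖x‖ ^ 2) :
    ∃ S : E →L[ℝ] E, S.IsPositive ∧ S * S = T ∧
      ∀ z, ‖(1 - S) z‖ ≤ ‖(1 - T) z‖ := by
  set M' : ℝ := max M m with hM'
  have hmM' : m ≤ M' := le_max_right _ _
  have hMM' : M ≤ M' := le_max_left _ _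
  set c : ℝ := M' + m with hc
  have hc0 : 0 < c := by positivity
  set q : ℝ := M' / c with hqdef
  have hq0 : 0 ≤ q := by positivity
  have hq1 : q < 1 := by rw [hqdef, div_lt_one hc0]; linarith
  set a : E →L[ℝ] E := 1 - c⁻¹ • T with ha
  have ha_apply : ∀ x, a x = x - c⁻¹ • T x := fun x => rfl
  have hasym : ∀ u v, ⟪a u, v⟫_ℝ = ⟪u, a v⟫_ℝ := by
    intro u v
    simp only [ha_apply, inner_sub_left, inner_sub_right, inner_smul_left, inner_smul_right,
      RCLike.star_def, starRingEnd_apply, star_trivial]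
    rw [hsa]
  have haquad : ∀ x, |⟪a x, x⟫_ℝ| ≤ q * ‖x‖ ^ 2 := by
    intro x
    have h1 : ⟪a x, x⟫_ℝ = ‖x‖ ^ 2 - c⁻¹ * ⟪T x, x⟫_ℝ := by
      rw [ha_apply, inner_sub_left, inner_smul_left, real_inner_self_eq_norm_sq]
      simp
    have h2 := hlow x; have h3 := hup x
    have hub : ⟪a x, x⟫_ℝ ≤ q * ‖x‖ ^ 2 := by
      rw [h1, hqdef]
      have h5 : c⁻¹ * (m * ‖x‖ ^ 2) ≤ c⁻¹ * ⟪T x, x⟫_ℝ :=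
        mul_le_mul_of_nonneg_left h2 (by positivity)
      have hcalc : ‖x‖ ^ 2 - c⁻¹ * (m * ‖x‖ ^ 2) = M' / c * ‖x‖ ^ 2 := by
        field_simp; ring
      linarith
    have hlb : 0 ≤ ⟪a x, x⟫_ℝ := by
      rw [h1]
      have h4 : c⁻¹ * ⟪T x, x⟫_ℝ ≤ c⁻¹ * (M' * ‖x‖ ^ 2) :=
        mul_le_mul_of_nonneg_left (h3.trans (by nlinarith [sq_nonneg ‖x‖])) (by positivity)
      have h6 : c⁻¹ * (M' * ‖x‖ ^ 2) ≤ ‖x‖ ^ 2 := by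
        rw [← mul_assoc]
        have : c⁻¹ * M' ≤ 1 := by
          rw [inv_mul_le_iff₀ hc0]; linarith
        nlinarith [sq_nonneg ‖x‖]
      linarith
    rw [abs_le]; constructor <;> nlinarith [sq_nonneg ‖x‖]
  have haop : ‖a‖ ≤ q := opNorm_le_bound a hq0 (sym_bound' a hasym haquad)
  -- fixed point with symmetry
  set P : Set (E →L[ℝ] E) := {y | ∀ u v, ⟪y u, v⟫_ℝ = ⟪u, y v⟫_ℝ} with hP
  have hPcl : IsClosed P := by
    have : P = ⋂ (u : E), ⋂ (v : E), {y : E →L[ℝ] E | ⟪y u, v⟫_ℝ = ⟪u, y v⟫_ℝ} := by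
      ext y; simp [hP, Set.mem_iInter]
    rw [this]
    refine isClosed_iInter fun u => isClosed_iInter fun v => isClosed_eq ?_ ?_
    · exact ((ContinuousLinearMap.apply ℝ E u).continuous).inner continuous_const
    · exact continuous_const.inner ((ContinuousLinearMap.apply ℝ E v).continuous)
  have hP0 : (0 : E →L[ℝ] E) ∈ P := by intro u v; simp
  have hPstep : ∀ y ∈ P, (2:ℝ)⁻¹ • (a + y * y) ∈ P := by
    intro y hy u v
    simp only [smul_apply, add_apply, ContinuousLinearMap.mul_apply, inner_smul_left,
      inner_smul_right, RCLike.star_def, starRingEnd_apply, star_trivial, inner_add_left,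
      inner_add_right]
    rw [hasym, hy (y u) v, hy u (y v)]
  obtain ⟨y, hyfix, hynorm, hysym⟩ := exists_fp' a hq0 hq1 haop P hPcl hP0 hPstep
  set r : ℝ := 1 - Real.sqrt (1 - q) with hrdef
  have h1q : (0:ℝ) ≤ 1 - q := by linarith
  have hr0 : 0 ≤ r := by
    have h : Real.sqrt (1 - q) ≤ Real.sqrt 1 := Real.sqrt_le_sqrt (by linarith)
    rw [Real.sqrt_one] at h
    simp only [hrdef]; linarith
  have hr1 : r < 1 := by
    have h : 0 < Real.sqrt (1 - q) := Real.sqrt_pos.mpr (by linarith)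
    simp only [hrdef]; linarith
  -- the square root
  set s : E →L[ℝ] E := 1 - y with hs
  set S : E →L[ℝ] E := Real.sqrt c • s with hS
  have hcsqrt : Real.sqrt c * Real.sqrt c = c := Real.mul_self_sqrt hc0.le
  have hyy : y + y = a + y * y := by
    have := congrArg (fun z => (2:ℝ) • z) hyfix
    simp only [smul_smul] at this
    rw [show (2:ℝ) * 2⁻¹ = 1 by norm_num, one_smul] at this
    rw [this, two_smul]
  have hss : s * s = c⁻¹ • T := by
    have hexp : s * s = 1 - (y + y) + y * y := by
      rw [hs]; simp only [mul_sub, sub_mul, one_mul, mul_one]; abel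
    rw [hexp, hyy, ha]
    abel
  have hSS : S * S = T := by
    ext x
    have h1 : (s * s) x = c⁻¹ • T x := by rw [hss]; rfl
    have h2 : s (s x) = c⁻¹ • T x := h1
    simp only [hS, ContinuousLinearMap.mul_apply, smul_apply, map_smul, smul_smul, hcsqrt]
    rw [h2, smul_smul, mul_inv_cancel₀ hc0.ne', one_smul]
  have hssym : ∀ u v, ⟪s u, v⟫_ℝ = ⟪u, s v⟫_ℝ := by
    intro u v
    simp only [hs, sub_apply, one_apply, inner_sub_left, inner_sub_right]
    rw [hysym]; rfl
  have hSsym : ∀ u v, ⟪S u, v⟫_ℝ = ⟪u, S v⟫_ℝ := by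
    intro u v
    simp only [hS, smul_apply, inner_smul_left, inner_smul_right, RCLike.star_def,
      starRingEnd_apply, star_trivial]
    rw [hssym]
  have hspos : ∀ x, 0 ≤ ⟪s x, x⟫_ℝ := by
    intro x
    have h1 : ⟪s x, x⟫_ℝ = ‖x‖ ^ 2 - ⟪y x, x⟫_ℝ := by
      simp [hs, inner_sub_left, real_inner_self_eq_norm_sq]
    have h2 : ⟪y x, x⟫_ℝ ≤ r * ‖x‖ ^ 2 := by
      calc ⟪y x, x⟫_ℝ ≤ ‖y x‖ * ‖x‖ := real_inner_le_norm _ _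
        _ ≤ (r * ‖x‖) * ‖x‖ := by
            have := y.le_opNorm x
            have h3 : ‖y x‖ ≤ r * ‖x‖ :=
              this.trans (mul_le_mul_of_nonneg_right hynorm (norm_nonneg _))
            exact mul_le_mul_of_nonneg_right h3 (norm_nonneg _)
        _ = r * ‖x‖ ^ 2 := by ring
    nlinarith [sq_nonneg ‖x‖]
  have hSpos : S.IsPositive := by
    constructor
    · exact fun u v => hSsym u v
    · intro x
      have : S.reApplyInnerSelf x = ⟪S x, x⟫_ℝ := rfl
      rw [this, hS, smul_apply, inner_smul_left]
      simp only [RCLike.star_def, starRingEnd_apply, star_trivial]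
      have := hspos x
      have hsc : 0 ≤ Real.sqrt c := Real.sqrt_nonneg _
      positivity
  refine ⟨S, hSpos, hSS, fun z => ?_⟩
  have hcoer : ∀ w, ‖w‖ ≤ ‖(1 + S) w‖ := by
    intro w
    have h1 : ‖w‖ ^ 2 ≤ ⟪(1 + S) w, w⟫_ℝ := by
      simp only [add_apply, one_apply, inner_add_left]
      have h2 : 0 ≤ ⟪S w, w⟫_ℝ := by
        rw [hS, smul_apply, inner_smul_left]
        simp only [RCLike.star_def, starRingEnd_apply, star_trivial]
        have := hspos w
        have hsc : 0 ≤ Real.sqrt c := Real.sqrt_nonneg _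
        positivity
      rw [show (1 : E →L[ℝ] E) w = w from rfl, real_inner_self_eq_norm_sq]
      linarith
    have h3 : ⟪(1 + S) w, w⟫_ℝ ≤ ‖(1 + S) w‖ * ‖w‖ := real_inner_le_norm _ _
    rcases eq_or_ne w 0 with rfl | hw
    · simp
    · have hwpos : 0 < ‖w‖ := norm_pos_iff.mpr hw
      nlinarith
  have hfactor : (1 + S) * (1 - S) = 1 - T := by
    have : (1 + S) * (1 - S) = 1 - S * S := by
      simp only [mul_sub, add_mul, mul_one, one_mul]; abel
    rw [this, hSS]
  calc ‖(1 - S) z‖ ≤ ‖(1 + S) ((1 - S) z)‖ := hcoer _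
    _ = ‖((1 + S) * (1 - S)) z‖ := by rw [ContinuousLinearMap.mul_apply]
    _ = ‖(1 - T) z‖ := by rw [hfactor]


set_option maxHeartbeats 2000000 in
set_option synthInstance.maxHeartbeats 200000 in
theorem memS_restrict {G₁ : Type u} {G₂ : Type v}
    [NormedAddCommGroup G₁] [InnerProductSpace ℝ G₁] [CompleteSpace G₁]
    [NormedAddCommGroup G₂] [InnerProductSpace ℝ G₂] [CompleteSpace G₂]
    (A : G₁ →L[ℝ] G₂) (hA : MemS A)
    (V : Submodule ℝ G₁) (hV : IsClosed (V : Set G₁)) :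
    ∃ h₂ : IsClosed ((V.map (A : G₁ →ₗ[ℝ] G₂) : Submodule ℝ G₂) : Set G₂),
      haveI : CompleteSpace V := hV.completeSpace_coe
      haveI : CompleteSpace (V.map (A : G₁ →ₗ[ℝ] G₂)) := h₂.completeSpace_coe
      MemS ((A.comp V.subtypeL).codRestrict (V.map (A : G₁ →ₗ[ℝ] G₂))
        (fun x => Submodule.mem_map_of_mem x.2)) := by
  obtain ⟨⟨B, hBA, hAB⟩, S, hSpos, hScomp, ι, b, hb⟩ := hA
  have hBA' : ∀ x, B (A x) = x := fun x => DFunLike.congr_fun hBA x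
  have hAB' : ∀ y, A (B y) = y := fun y => DFunLike.congr_fun hAB y
  have h₂ : IsClosed ((V.map (A : G₁ →ₗ[ℝ] G₂) : Submodule ℝ G₂) : Set G₂) := by
    have hset : ((V.map (A : G₁ →ₗ[ℝ] G₂) : Submodule ℝ G₂) : Set G₂) = B ⁻¹' (V : Set G₁) := by
      ext y
      constructor
      · rintro ⟨x, hx, rfl⟩
        simpa [hBA' x] using hx
      · intro hy
        exact ⟨B y, hy, hAB' y⟩
    rw [hset]
    exact hV.preimage B.continuous
  refine ⟨h₂, ?_⟩
  letI : CompleteSpace V := hV.completeSpace_coe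
  letI : CompleteSpace (V.map (A : G₁ →ₗ[ℝ] G₂)) := h₂.completeSpace_coe
  set A' : V →L[ℝ] (V.map (A : G₁ →ₗ[ℝ] G₂)) :=
    (A.comp V.subtypeL).codRestrict (V.map (A : G₁ →ₗ[ℝ] G₂)) (fun x => Submodule.mem_map_of_mem x.2) with hA'
  have hA'app : ∀ x : V, (A' x : G₂) = A (x : G₁) := fun x => rfl
  constructor
  · -- bounded invertibility of the restriction
    have hmem : ∀ y : V.map (A : G₁ →ₗ[ℝ] G₂), B (y : G₂) ∈ V := by
      rintro ⟨y, x, hx, rfl⟩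
      simpa [hBA' x] using hx
    refine ⟨(B.comp (V.map (A : G₁ →ₗ[ℝ] G₂)).subtypeL).codRestrict V hmem, ?_, ?_⟩
    · ext z
      show B (A (z : G₁)) = (z : G₁)
      exact hBA' _
    · ext z
      show A (B (z : G₂)) = (z : G₂)
      exact hAB' _
  · -- the positive square root of (A'* ∘ A')
    set T' : V →L[ℝ] V := (ContinuousLinearMap.adjoint A').comp A' with hT'
    have hT'inner : ∀ u v : V, ⟪T' u, v⟫_ℝ = ⟪A (u : G₁), A (v : G₁)⟫_ℝ := by
      intro u v
      rw [hT', comp_apply, adjoint_inner_left]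
      rw [Submodule.coe_inner]
      rfl
    have hT'sym : ∀ u v : V, ⟪T' u, v⟫_ℝ = ⟪u, T' v⟫_ℝ := by
      intro u v
      rw [hT'inner u v, real_inner_comm, ← hT'inner v u, real_inner_comm]
    set m : ℝ := ((‖B‖ + 1)⁻¹) ^ 2 with hm
    have hm0 : 0 < m := by positivity
    have hlow : ∀ u : V, m * ‖u‖ ^ 2 ≤ ⟪T' u, u⟫_ℝ := by
      intro u
      rw [hT'inner u u, real_inner_self_eq_norm_sq]
      have h1 : ‖(u : G₁)‖ ≤ (‖B‖ + 1) * ‖A (u : G₁)‖ := by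
        calc ‖(u : G₁)‖ = ‖B (A (u : G₁))‖ := by rw [hBA']
          _ ≤ ‖B‖ * ‖A (u : G₁)‖ := B.le_opNorm _
          _ ≤ (‖B‖ + 1) * ‖A (u : G₁)‖ :=
              mul_le_mul_of_nonneg_right (by linarith) (norm_nonneg _)
      have h2 : ‖u‖ = ‖(u : G₁)‖ := Submodule.coe_norm u
      rw [h2, hm]
      have hB1 : (0:ℝ) < ‖B‖ + 1 := by positivity
      have h3 : ‖(u : G₁)‖ ^ 2 ≤ (‖B‖ + 1) ^ 2 * ‖A (u : G₁)‖ ^ 2 := by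
        nlinarith [norm_nonneg (u : G₁), norm_nonneg (A (u : G₁))]
      have h4 : ((‖B‖ + 1)⁻¹) ^ 2 * ‖(u : G₁)‖ ^ 2 ≤
          ((‖B‖ + 1)⁻¹) ^ 2 * ((‖B‖ + 1) ^ 2 * ‖A (u : G₁)‖ ^ 2) :=
        mul_le_mul_of_nonneg_left h3 (by positivity)
      calc ((‖B‖ + 1)⁻¹) ^ 2 * ‖(u : G₁)‖ ^ 2
          ≤ ((‖B‖ + 1)⁻¹) ^ 2 * ((‖B‖ + 1) ^ 2 * ‖A (u : G₁)‖ ^ 2) := h4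
        _ = ‖A (u : G₁)‖ ^ 2 := by field_simp
    have hup : ∀ u : V, ⟪T' u, u⟫_ℝ ≤ ‖A‖ ^ 2 * ‖u‖ ^ 2 := by
      intro u
      rw [hT'inner u u, real_inner_self_eq_norm_sq]
      have h1 : ‖A (u : G₁)‖ ≤ ‖A‖ * ‖(u : G₁)‖ := A.le_opNorm _
      have h2 : ‖u‖ = ‖(u : G₁)‖ := Submodule.coe_norm u
      rw [h2]
      nlinarith [norm_nonneg (A (u : G₁)), norm_nonneg (u : G₁), opNorm_nonneg A]
    obtain ⟨S', hS'pos, hS'sq, hS'bound⟩ := exists_sqrt_s4 T' hT'sym hm0 hlow hup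
    refine ⟨S', hS'pos, ?_, ?_⟩
    · rw [← ContinuousLinearMap.mul_def, hS'sq, hT']
    · -- Hilbert–Schmidt part
      -- the operator A*A - 1 on G₁ is Hilbert–Schmidt w.r.t. b
      set Kbig : G₁ →L[ℝ] G₁ :=
        (ContinuousLinearMap.adjoint A).comp A - ContinuousLinearMap.id ℝ G₁ with hKbig
      have hKbig_apply : ∀ x, Kbig x = (ContinuousLinearMap.adjoint A) (A x) - x :=
        fun x => rfl
      have hKbigHS : Summable fun i => ‖Kbig (b i)‖ ^ 2 := by
        have hbound : ∀ i, ‖Kbig (b i)‖ ≤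
            ‖S + 1‖ * ‖(ContinuousLinearMap.id ℝ G₁ - S) (b i)‖ := by
          intro i
          have h1 : Kbig (b i) = (S + 1) (S (b i) - b i) := by
            rw [hKbig_apply]
            have hcomp : (ContinuousLinearMap.adjoint A) (A (b i)) = S (S (b i)) := by
              have := DFunLike.congr_fun hScomp (b i)
              exact this.symm
            rw [hcomp]
            simp only [add_apply, one_apply, map_sub]
            simp only [show ∀ z : G₁, (1 : G₁ →L[ℝ] G₁) z = z from fun _ => rfl]
            abel
          rw [h1]
          have h2 := (S + 1).le_opNorm (S (b i) - b i)
          have h3 : ‖S (b i) - b i‖ = ‖(ContinuousLinearMap.id ℝ G₁ - S) (b i)‖ := by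
            rw [show (ContinuousLinearMap.id ℝ G₁ - S) (b i) = b i - S (b i) from rfl,
              norm_sub_rev]
          rw [← h3]
          exact h2
        refine Summable.of_nonneg_of_le (fun i => sq_nonneg _) (fun i => ?_)
          (hb.mul_left (‖S + 1‖ ^ 2))
        have h := hbound i
        have hn : 0 ≤ ‖Kbig (b i)‖ := norm_nonneg _
        have hn2 : 0 ≤ ‖S + 1‖ := norm_nonneg _
        calc ‖Kbig (b i)‖ ^ 2 ≤ (‖S + 1‖ * ‖(ContinuousLinearMap.id ℝ G₁ - S) (b i)‖) ^ 2 := by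
              nlinarith [norm_nonneg ((ContinuousLinearMap.id ℝ G₁ - S) (b i))]
          _ = ‖S + 1‖ ^ 2 * ‖(ContinuousLinearMap.id ℝ G₁ - S) (b i)‖ ^ 2 := by ring
      -- get a Hilbert basis of V
      obtain ⟨w, e, -⟩ := exists_hilbertBasis ℝ V
      refine ⟨w, e, ?_⟩
      have horth : Orthonormal ℝ (fun i : w => ((e i : V) : G₁)) := by
        have he := e.orthonormal
        constructor
        · intro i
          rw [← Submodule.coe_norm]
          exact he.1 i
        · intro i j hij
          rw [← Submodule.coe_inner]
          exact he.2 hij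
      have htrans : Summable fun i : w => ‖Kbig ((e i : V) : G₁)‖ ^ 2 :=
        hs_transfer Kbig b hKbigHS horth
      -- compare ‖(1 - S') (e i)‖ with ‖Kbig (e i)‖
      have hcomp2 : ∀ u : V, ‖(ContinuousLinearMap.id ℝ V - S') u‖ ≤ ‖Kbig (u : G₁)‖ := by
        intro u
        have h0 : (ContinuousLinearMap.id ℝ V - S') u = (1 - S') u := rfl
        have h1 : ‖(1 - S') u‖ ≤ ‖(1 - T') u‖ := hS'bound u
        have h2 : (1 - T') u = u - T' u := rfl
        -- identify T' u - u with the projection of Kbig u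
        have h3 : T' u - u = V.orthogonalProjectionOnto (Kbig (u : G₁)) := by
          apply ext_inner_right ℝ
          intro v
          rw [inner_sub_left]
          rw [hT'inner u v]
          rw [show ⟪V.orthogonalProjectionOnto (Kbig (u : G₁)), v⟫_ℝ
              = ⟪v, V.orthogonalProjectionOnto (Kbig (u : G₁))⟫_ℝ from real_inner_comm _ _,
            Submodule.inner_orthogonalProjectionOnto_eq_of_mem_left (K := V) v (Kbig (u : G₁)),
            real_inner_comm]
          rw [hKbig_apply, inner_sub_right, adjoint_inner_right, ← Submodule.coe_inner,
            real_inner_comm u v]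
        have h4 : ‖u - T' u‖ = ‖T' u - u‖ := norm_sub_rev _ _
        have h5 : ‖V.orthogonalProjectionOnto (Kbig (u : G₁))‖ ≤ ‖Kbig (u : G₁)‖ := by
          calc ‖V.orthogonalProjectionOnto (Kbig (u : G₁))‖
              ≤ ‖V.orthogonalProjectionOnto‖ * ‖Kbig (u : G₁)‖ :=
                (V.orthogonalProjectionOnto).le_opNorm _
            _ ≤ 1 * ‖Kbig (u : G₁)‖ :=
                mul_le_mul_of_nonneg_right (Submodule.orthogonalProjectionOnto_norm_le (K := V)) (norm_nonneg _)
            _ = ‖Kbig (u : G₁)‖ := one_mul _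
        rw [h0]
        calc ‖(1 - S') u‖ ≤ ‖(1 - T') u‖ := h1
          _ = ‖T' u - u‖ := by rw [h2, h4]
          _ = ‖V.orthogonalProjectionOnto (Kbig (u : G₁))‖ := by rw [h3]
          _ ≤ ‖Kbig (u : G₁)‖ := h5
      refine Summable.of_nonneg_of_le (fun i => sq_nonneg _) (fun i => ?_) htrans
      have h := hcomp2 (e i)
      nlinarith [norm_nonneg ((ContinuousLinearMap.id ℝ V - S') (e i)),
        norm_nonneg (Kbig ((e i : V) : G₁))]

end
end

section
/- Let G₁ and G₂ be real Hilbert spaces and A ∈ S(G₁,G₂). Then there exist an orthonormal basis (eᵢ)_{i∈I} of G₁ and positive real numbers (λᵢ)_{i∈I} such that (A*A)^{1/2} eᵢ = λᵢ eᵢ for every i, ∑ᵢ (λᵢ − 1)² < ∞, and the vectors fᵢ := λᵢ⁻¹ A eᵢ form an orthonormal basis of G₂. -/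
open ContinuousLinearMap
open scoped InnerProductSpace

noncomputable section

universe u v w

section MyAux


variable {E : Type*} [NormedAddCommGroup E] [InnerProductSpace ℝ E]
variable {F : Type*} [NormedAddCommGroup F] [InnerProductSpace ℝ F]

lemma my_finrank_compact (T : E →L[ℝ] F) (U : Submodule ℝ F) [FiniteDimensional ℝ U]
    (h : ∀ x, T x ∈ U) : IsCompactOperator T := by
  refine ⟨Subtype.val '' Metric.closedBall (0 : U) ‖T‖, ?_, ?_⟩
  · exact (isCompact_closedBall _ _).image continuous_subtype_val
  · refine Filter.mem_of_superset (Metric.closedBall_mem_nhds (0 : E) one_pos) ?_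
    intro x hx
    refine ⟨⟨T x, h x⟩, ?_, rfl⟩
    simp only [Metric.mem_closedBall, dist_zero_right] at hx ⊢
    calc ‖(⟨T x, h x⟩ : U)‖ = ‖T x‖ := rfl
      _ ≤ ‖T‖ * ‖x‖ := T.le_opNorm x
      _ ≤ ‖T‖ * 1 := by gcongr
      _ = ‖T‖ := mul_one _

lemma my_parseval' {κ : Type*} (b : HilbertBasis κ ℝ E) (x : E) :
    HasSum (fun i => ⟪x, b i⟫_ℝ ^ 2) (‖x‖ ^ 2) := by
  have h := b.hasSum_inner_mul_inner x x
  have h2 : ∀ i, ⟪x, b i⟫_ℝ * ⟪b i, x⟫_ℝ = ⟪x, b i⟫_ℝ ^ 2 := fun i => by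
    rw [real_inner_comm (b i) x]; ring
  simpa [h2, real_inner_self_eq_norm_sq] using h

lemma my_hs_compact [CompleteSpace E] [CompleteSpace F] {κ : Type*} (T : E →L[ℝ] F)
    (b : HilbertBasis κ ℝ E) (hb : Summable fun i => ‖T (b i)‖ ^ 2) :
    IsCompactOperator T := by
  classical
  set g : Finset κ → (E →L[ℝ] F) :=
    fun s => ∑ i ∈ s, ((innerSL ℝ (b i : E)).smulRight (T (b i))) with hg
  have hgapp : ∀ s x, g s x = ∑ i ∈ s, ⟪(b i : E), x⟫_ℝ • T (b i) := by
    intro s x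
    simp [hg, ContinuousLinearMap.sum_apply]
  -- each g s is compact
  have hgcomp : ∀ s, IsCompactOperator (g s) := by
    intro s
    have : FiniteDimensional ℝ (Submodule.span ℝ ((fun i => T (b i)) '' s)) :=
      FiniteDimensional.span_of_finite ℝ ((s : Set κ).toFinite.image _)
    refine my_finrank_compact (g s) (Submodule.span ℝ ((fun i => T (b i)) '' s)) ?_
    intro x
    rw [hgapp]
    refine Submodule.sum_mem _ fun i hi => Submodule.smul_mem _ _ (Submodule.subset_span ?_)
    exact ⟨i, hi, rfl⟩
  -- tail
  set tail : Finset κ → ℝ :=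
    fun s => ∑' (i : κ), (if i ∈ s then (0:ℝ) else ‖T (b i)‖ ^ 2) with htail
  have htail_sum : ∀ s : Finset κ, Summable fun i : κ => (if i ∈ s then (0:ℝ) else ‖T (b i)‖ ^ 2) := by
    intro s
    refine Summable.of_nonneg_of_le (fun i => ?_) (fun i => ?_) hb
    · by_cases hi : i ∈ s <;> simp [hi] <;> positivity
    · by_cases hi : i ∈ s <;> simp [hi] <;> positivity
  -- operator norm bound
  have hbound : ∀ s, ‖g s - T‖ ≤ Real.sqrt (tail s) := by
    intro s
    refine ContinuousLinearMap.opNorm_le_bound _ (Real.sqrt_nonneg _) fun x => ?_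
    have h1 : HasSum (fun i => ⟪(b i : E), x⟫_ℝ • T (b i)) (T x) := by
      have := (b.hasSum_repr x).mapL T
      refine this.congr_fun fun i => ?_
      rw [b.repr_apply_apply]
      simp
    have h2 : HasSum (fun i => if i ∈ s then ⟪(b i : E), x⟫_ℝ • T (b i) else 0) (g s x) := by
      have heq : (∑ i ∈ s, ⟪(b i : E), x⟫_ℝ • T (b i))
          = ∑ i ∈ s, (if i ∈ s then ⟪(b i : E), x⟫_ℝ • T (b i) else 0) :=
        Finset.sum_congr rfl fun i hi => by simp [hi]
      rw [hgapp, heq]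
      exact hasSum_sum_of_ne_finset_zero (by intro i hi; simp [hi])
    have h3 : HasSum (fun i => if i ∈ s then 0 else ⟪(b i : E), x⟫_ℝ • T (b i))
        (T x - g s x) := by
      have := h1.sub h2
      refine this.congr_fun fun i => ?_
      by_cases hi : i ∈ s <;> simp [hi]
    set d : κ → ℝ := fun i => if i ∈ s then 0 else |⟪(b i : E), x⟫_ℝ| * ‖T (b i)‖ with hd
    have hd_nonneg : ∀ i, (0:ℝ) ≤ d i := by
      intro i; rw [hd]; dsimp only; split <;> positivity
    have hpartial : ∀ t : Finset κ, ∑ i ∈ t, d i ≤ Real.sqrt (tail s) * ‖x‖ := by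
      intro t
      have hrw : ∑ i ∈ t, d i
          = ∑ i ∈ t, |⟪(b i : E), x⟫_ℝ| * (if i ∈ s then (0:ℝ) else ‖T (b i)‖) := by
        refine Finset.sum_congr rfl fun i _ => ?_
        rw [hd]; dsimp only; split <;> simp
      rw [hrw]
      have cs := Real.sum_mul_le_sqrt_mul_sqrt t
        (fun i => |⟪(b i : E), x⟫_ℝ|) (fun i => if i ∈ s then (0:ℝ) else ‖T (b i)‖)
      refine cs.trans ?_
      have hA : Real.sqrt (∑ i ∈ t, |⟪(b i : E), x⟫_ℝ| ^ 2) ≤ ‖x‖ := by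
        rw [show ‖x‖ = Real.sqrt (‖x‖ ^ 2) by rw [Real.sqrt_sq (norm_nonneg x)]]
        refine Real.sqrt_le_sqrt ?_
        have := b.orthonormal.sum_inner_products_le x (s := t)
        simpa [Real.norm_eq_abs] using this
      have hB : Real.sqrt (∑ i ∈ t, (if i ∈ s then (0:ℝ) else ‖T (b i)‖) ^ 2)
          ≤ Real.sqrt (tail s) := by
        refine Real.sqrt_le_sqrt ?_
        have : ∀ i, (if i ∈ s then (0:ℝ) else ‖T (b i)‖) ^ 2
            = (if i ∈ s then (0:ℝ) else ‖T (b i)‖ ^ 2) := by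
          intro i; split <;> simp
        rw [Finset.sum_congr rfl fun i _ => this i]
        exact Summable.sum_le_tsum t (fun i _ => by split <;> positivity) (htail_sum s)
      calc Real.sqrt (∑ i ∈ t, |⟪(b i : E), x⟫_ℝ| ^ 2)
            * Real.sqrt (∑ i ∈ t, (if i ∈ s then (0:ℝ) else ‖T (b i)‖) ^ 2)
          ≤ ‖x‖ * Real.sqrt (tail s) :=
            mul_le_mul hA hB (Real.sqrt_nonneg _) (norm_nonneg x)
        _ = Real.sqrt (tail s) * ‖x‖ := mul_comm _ _
    have hd_sum : Summable d := summable_of_sum_le hd_nonneg hpartial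
    have htsum_le : ∑' i, d i ≤ Real.sqrt (tail s) * ‖x‖ :=
      Summable.tsum_le_of_sum_le hd_sum hpartial
    have hnorm_eq : ∀ i, ‖(if i ∈ s then 0 else ⟪(b i : E), x⟫_ℝ • T (b i))‖ = d i := by
      intro i; rw [hd]; dsimp only
      split <;> simp [norm_smul, Real.norm_eq_abs]
    have : ‖T x - g s x‖ ≤ ∑' i, d i := by
      rw [← h3.tsum_eq]
      refine le_trans (norm_tsum_le_tsum_norm ?_) ?_
      · exact hd_sum.congr fun i => (hnorm_eq i).symm
      · exact le_of_eq (tsum_congr hnorm_eq)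
    calc ‖(g s - T) x‖ = ‖T x - g s x‖ := by
          rw [ContinuousLinearMap.sub_apply, norm_sub_rev]
      _ ≤ ∑' i, d i := this
      _ ≤ Real.sqrt (tail s) * ‖x‖ := htsum_le
  -- tendsto
  have htail0 : Filter.Tendsto tail Filter.atTop (nhds 0) := by
    have heq : ∀ s : Finset κ, tail s = ∑' i : {x // x ∉ s}, ‖T (b i)‖ ^ 2 := by
      intro s
      calc tail s = ∑' i : κ, Set.indicator {x | x ∉ s} (fun i => ‖T (b i)‖ ^ 2) i := by
            rw [htail]
            dsimp only
            refine tsum_congr fun i => ?_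
            by_cases hi : i ∈ s <;> simp [Set.indicator, hi]
        _ = ∑' i : {x // x ∉ s}, ‖T (b i)‖ ^ 2 := (tsum_subtype _ _).symm
    have := tendsto_tsum_compl_atTop_zero (fun i => ‖T (b i)‖ ^ 2)
    exact (Filter.tendsto_congr fun s => (heq s).symm).mp this
  have hgT : Filter.Tendsto g Filter.atTop (nhds T) := by
    rw [tendsto_iff_norm_sub_tendsto_zero]
    refine squeeze_zero (fun s => norm_nonneg _) hbound ?_
    have : Filter.Tendsto (fun s => Real.sqrt (tail s)) Filter.atTop (nhds (Real.sqrt 0)) :=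
      (Real.continuous_sqrt.tendsto 0).comp htail0
    simpa [Real.sqrt_zero] using this
  exact isCompactOperator_of_tendsto hgT (Filter.Eventually.of_forall hgcomp)

lemma my_transfer [CompleteSpace E] {κ : Type*} {ι' : Type*} (T : E →L[ℝ] E)
    (hT : IsSelfAdjoint T) {b : HilbertBasis κ ℝ E}
    (hb : Summable fun i => ‖T (b i)‖ ^ 2) {v : ι' → E} (hv : Orthonormal ℝ v) :
    Summable fun j => ‖T (v j)‖ ^ 2 := by
  have hsym := (ContinuousLinearMap.isSelfAdjoint_iff_isSymmetric.mp hT)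
  refine summable_of_sum_le (c := ∑' i, ‖T (b i)‖ ^ 2) (fun j => by positivity) (fun s => ?_)
  have key : ∀ j, ‖T (v j)‖ ^ 2 = ∑' i, ⟪v j, T (b i)⟫_ℝ ^ 2 := by
    intro j
    rw [← (my_parseval' b (T (v j))).tsum_eq]
    exact tsum_congr fun i => congrArg (fun t => t ^ 2) (hsym (v j) (b i))
  calc ∑ j ∈ s, ‖T (v j)‖ ^ 2 = ∑ j ∈ s, ∑' i, ⟪v j, T (b i)⟫_ℝ ^ 2 := by
        exact Finset.sum_congr rfl fun j _ => key j
    _ = ∑' i, ∑ j ∈ s, ⟪v j, T (b i)⟫_ℝ ^ 2 := by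
        rw [Summable.tsum_finsetSum]
        intro j _
        have := (my_parseval' b (T (v j))).summable
        exact this.congr fun i => congrArg (fun t => t ^ 2) (hsym (v j) (b i))
    _ ≤ ∑' i, ‖T (b i)‖ ^ 2 := by
        refine Summable.tsum_le_tsum (fun i => ?_) ?_ hb
        · have := hv.sum_inner_products_le (T (b i)) (s := s)
          simpa [Real.norm_eq_abs, sq_abs] using this
        · refine summable_sum fun j _ => ?_
          have := (my_parseval' b (T (v j))).summable
          exact this.congr fun i => congrArg (fun t => t ^ 2) (hsym (v j) (b i))
    _ ≤ ∑' i, ‖T (b i)‖ ^ 2 := le_refl _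




lemma my_polar_bound [CompleteSpace E] (T : E →L[ℝ] E) (hT : IsSelfAdjoint T) {C : ℝ}
    (hC : 0 ≤ C) (h : ∀ x : E, |⟪T x, x⟫_ℝ| ≤ C * ‖x‖ ^ 2) : ∀ x : E, ‖T x‖ ≤ C * ‖x‖ := by
  have hsym := ContinuousLinearMap.isSelfAdjoint_iff_isSymmetric.mp hT
  have key : ∀ x y : E, ⟪T x, y⟫_ℝ ≤ C / 2 * (‖x‖ ^ 2 + ‖y‖ ^ 2) := by
    intro x y
    have hpolar : ⟪T (x + y), x + y⟫_ℝ - ⟪T (x - y), x - y⟫_ℝ = 4 * ⟪T x, y⟫_ℝ := by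
      have hyx : ⟪T y, x⟫_ℝ = ⟪T x, y⟫_ℝ := (hsym y x).trans (real_inner_comm _ _)
      simp only [map_add, map_sub, inner_add_left, inner_add_right, inner_sub_left,
        inner_sub_right]
      rw [hyx]; ring
    have h1 : ⟪T (x + y), x + y⟫_ℝ ≤ C * ‖x + y‖ ^ 2 :=
      le_trans (le_abs_self _) (h (x + y))
    have h2 : -(C * ‖x - y‖ ^ 2) ≤ ⟪T (x - y), x - y⟫_ℝ :=
      neg_le_of_abs_le (h (x - y))
    have hpar : ‖x + y‖ ^ 2 + ‖x - y‖ ^ 2 = 2 * (‖x‖ ^ 2 + ‖y‖ ^ 2) := by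
      have := parallelogram_law_with_norm ℝ x y
      linarith [this]
    nlinarith [hpolar, h1, h2, hpar]
  intro x
  by_cases hTx : T x = 0
  · rw [hTx, norm_zero]; positivity
  · have hTxn : 0 < ‖T x‖ := norm_pos_iff.mpr hTx
    set y : E := (‖x‖ / ‖T x‖) • T x with hy
    have hyy : ⟪T x, y⟫_ℝ = ‖x‖ * ‖T x‖ := by
      rw [hy, real_inner_smul_right, real_inner_self_eq_norm_sq]
      field_simp
    have hyn : ‖y‖ = ‖x‖ := by
      rw [hy, norm_smul, Real.norm_eq_abs, abs_div, abs_of_nonneg (norm_nonneg x),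
        abs_of_nonneg (norm_nonneg (T x))]
      field_simp
    have := key x y
    rw [hyy, hyn] at this
    -- ‖x‖ * ‖T x‖ ≤ C / 2 * (2 ‖x‖^2)
    by_cases hx : x = 0
    · exact absurd (by simp [hx]) hTx
    · have hxn : 0 < ‖x‖ := norm_pos_iff.mpr hx
      have : ‖x‖ * ‖T x‖ ≤ C * ‖x‖ ^ 2 := by nlinarith
      calc ‖T x‖ = (‖x‖ * ‖T x‖) / ‖x‖ := by field_simp
        _ ≤ (C * ‖x‖ ^ 2) / ‖x‖ := by gcongr
        _ = C * ‖x‖ := by field_simp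

lemma my_eigen_max [CompleteSpace E] (T : E →L[ℝ] E)
    (hcp : IsCompactOperator T) {M : ℝ} (hM : 0 < M)
    (happrox : ∀ ε : ℝ, 0 < ε → ∃ x : E, ‖x‖ = 1 ∧ M - ε < ⟪T x, x⟫_ℝ)
    (hnorm : ∀ x : E, ‖T x‖ ≤ M * ‖x‖) :
    ∃ x : E, ‖x‖ = 1 ∧ T x = M • x := by
  have hseq : ∀ n : ℕ, ∃ x : E, ‖x‖ = 1 ∧ M - 1/(n+1) < ⟪T x, x⟫_ℝ := fun n =>
    happrox (1/(n+1)) (by positivity)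
  choose u hu1 hu2 using hseq
  set d : ℕ → E := fun n => T (u n) - M • u n with hd
  have hdiff : ∀ n : ℕ, ‖d n‖ ^ 2 ≤ 2 * M * (1/(n+1)) := by
    intro n
    have hn1 : ‖u n‖ = 1 := hu1 n
    have expand : ‖d n‖ ^ 2
        = ‖T (u n)‖ ^ 2 - 2 * (M * ⟪T (u n), u n⟫_ℝ) + M ^ 2 := by
      rw [hd]
      dsimp only
      rw [norm_sub_sq_real, real_inner_smul_right, norm_smul]
      simp [hn1, Real.norm_eq_abs, abs_of_pos hM]
    have hTn : ‖T (u n)‖ ^ 2 ≤ M ^ 2 := by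
      have h1 := hnorm (u n)
      rw [hn1, mul_one] at h1
      nlinarith [norm_nonneg (T (u n))]
    have h2 := hu2 n
    have h3 : (0:ℝ) < 1/(n+1) := by positivity
    nlinarith
  have hd0 : Filter.Tendsto d Filter.atTop (nhds 0) := by
    rw [tendsto_zero_iff_norm_tendsto_zero]
    have hsq : Filter.Tendsto (fun n : ℕ => 2 * M * (1/(n+1) : ℝ)) Filter.atTop (nhds 0) := by
      have := tendsto_one_div_add_atTop_nhds_zero_nat (𝕜 := ℝ)
      simpa using this.const_mul (2 * M)
    have h1 : Filter.Tendsto (fun n => ‖d n‖ ^ 2) Filter.atTop (nhds 0) :=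
      squeeze_zero (fun n => by positivity) hdiff hsq
    have h2 : Filter.Tendsto (fun n => Real.sqrt (‖d n‖ ^ 2)) Filter.atTop (nhds (Real.sqrt 0)) :=
      (Real.continuous_sqrt.tendsto 0).comp h1
    simpa [Real.sqrt_sq_eq_abs] using h2
  obtain ⟨K, hK, hKsub⟩ := hcp.image_closedBall_subset_compact 1
  have hmem : ∀ n, T (u n) ∈ K := by
    intro n
    refine hKsub ⟨u n, ?_, rfl⟩
    simp [Metric.mem_closedBall, hu1 n]
  obtain ⟨a, _, φ, hφ, hconv⟩ := hK.isSeqCompact hmem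
  -- M • u (φ k)  converges to a
  have hMu : Filter.Tendsto (fun k => M • u (φ k)) Filter.atTop (nhds a) := by
    have h1 : Filter.Tendsto (fun k => T (u (φ k)) - d (φ k)) Filter.atTop (nhds (a - 0)) :=
      hconv.sub (hd0.comp hφ.tendsto_atTop)
    simpa [hd] using h1
  set z : E := M⁻¹ • a with hz
  have huz : Filter.Tendsto (fun k => u (φ k)) Filter.atTop (nhds z) := by
    have := hMu.const_smul M⁻¹
    simpa [hz, smul_smul, inv_mul_cancel₀ hM.ne'] using this
  have hzn : ‖z‖ = 1 := by
    have h1 : Filter.Tendsto (fun k => ‖u (φ k)‖) Filter.atTop (nhds ‖z‖) := huz.norm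
    have h2 : Filter.Tendsto (fun k => ‖u (φ k)‖) Filter.atTop (nhds 1) := by
      simpa [hu1] using tendsto_const_nhds (α := ℝ) (x := 1)
    exact tendsto_nhds_unique h1 h2
  refine ⟨z, hzn, ?_⟩
  have hTz : Filter.Tendsto (fun k => T (u (φ k))) Filter.atTop (nhds (T z)) :=
    (T.continuous.tendsto z).comp huz
  have hTz' : T z = a := tendsto_nhds_unique hTz hconv
  have hMz : M • z = a := by
    rw [hz, smul_smul, mul_inv_cancel₀ hM.ne', one_smul]
  rw [hTz', hMz]

lemma my_exists_eigenvector [CompleteSpace E] [Nontrivial E] (T : E →L[ℝ] E)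
    (hT : IsSelfAdjoint T) (hcp : IsCompactOperator T) :
    ∃ (x : E) (μ : ℝ), ‖x‖ = 1 ∧ T x = μ • x := by
  obtain ⟨x0, hx0⟩ := exists_ne (0 : E)
  have he0 : ‖(‖x0‖⁻¹ • x0 : E)‖ = 1 := norm_smul_inv_norm hx0
  set e0 : E := ‖x0‖⁻¹ • x0 with he0def
  set Q : Set ℝ := {r : ℝ | ∃ x : E, ‖x‖ = 1 ∧ r = ⟪T x, x⟫_ℝ} with hQ
  have hQne : Q.Nonempty := ⟨⟪T e0, e0⟫_ℝ, e0, he0, rfl⟩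
  have hQbddAbove : BddAbove Q := by
    refine ⟨‖T‖, fun r hr => ?_⟩
    obtain ⟨x, hx1, rfl⟩ := hr
    calc ⟪T x, x⟫_ℝ ≤ ‖T x‖ * ‖x‖ := real_inner_le_norm _ _
      _ ≤ ‖T‖ * ‖x‖ * ‖x‖ := by gcongr; exact T.le_opNorm x
      _ = ‖T‖ := by rw [hx1]; ring
  have hQbddBelow : BddBelow Q := by
    refine ⟨-‖T‖, fun r hr => ?_⟩
    obtain ⟨x, hx1, rfl⟩ := hr
    have h1 : |⟪T x, x⟫_ℝ| ≤ ‖T x‖ * ‖x‖ := abs_real_inner_le_norm _ _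
    have h2 : ‖T x‖ * ‖x‖ ≤ ‖T‖ := by
      calc ‖T x‖ * ‖x‖ ≤ ‖T‖ * ‖x‖ * ‖x‖ := by gcongr; exact T.le_opNorm x
        _ = ‖T‖ := by rw [hx1]; ring
    have := neg_abs_le (⟪T x, x⟫_ℝ)
    linarith
  set M : ℝ := sSup Q with hM
  set m : ℝ := sInf Q with hm
  set C : ℝ := max M (-m) with hC
  have hub : ∀ x : E, ‖x‖ = 1 → ⟪T x, x⟫_ℝ ≤ M := fun x hx =>
    le_csSup hQbddAbove ⟨x, hx, rfl⟩
  have hlb : ∀ x : E, ‖x‖ = 1 → m ≤ ⟪T x, x⟫_ℝ := fun x hx =>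
    csInf_le hQbddBelow ⟨x, hx, rfl⟩
  have hC0 : 0 ≤ C := by
    have h1 := hub e0 he0
    have h2 := hlb e0 he0
    rw [hC]
    rcases le_or_gt 0 M with h | h
    · exact le_max_of_le_left h
    · refine le_max_of_le_right ?_
      linarith
  have habs : ∀ x : E, |⟪T x, x⟫_ℝ| ≤ C * ‖x‖ ^ 2 := by
    intro x
    by_cases hx : x = 0
    · simp [hx]
    · have hxn : 0 < ‖x‖ := norm_pos_iff.mpr hx
      set w : E := ‖x‖⁻¹ • x with hw
      have hwn : ‖w‖ = 1 := norm_smul_inv_norm hx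
      have hscale : ⟪T x, x⟫_ℝ = ‖x‖ ^ 2 * ⟪T w, w⟫_ℝ := by
        rw [hw, map_smul, real_inner_smul_left, real_inner_smul_right]
        field_simp
      have h1 := hub w hwn
      have h2 := hlb w hwn
      have h3 : |⟪T w, w⟫_ℝ| ≤ C := by
        rw [abs_le]
        constructor
        · rw [hC]
          have := le_max_right M (-m)
          linarith
        · rw [hC]
          have := le_max_left M (-m)
          linarith
      rw [hscale, abs_mul, abs_of_nonneg (by positivity : (0:ℝ) ≤ ‖x‖ ^ 2)]
      calc ‖x‖ ^ 2 * |⟪T w, w⟫_ℝ| ≤ ‖x‖ ^ 2 * C := by gcongr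
        _ = C * ‖x‖ ^ 2 := mul_comm _ _
  have hnorm : ∀ x : E, ‖T x‖ ≤ C * ‖x‖ := my_polar_bound T hT hC0 habs
  rcases eq_or_lt_of_le hC0 with hCeq | hCpos
  · -- C = 0, so T = 0
    refine ⟨e0, 0, he0, ?_⟩
    have : ‖T e0‖ ≤ 0 := by
      have := hnorm e0
      rw [he0, ← hCeq] at this
      simpa using this
    have hTz : T e0 = 0 := by
      have := norm_nonneg (T e0)
      have h0 : ‖T e0‖ = 0 := le_antisymm ‹‖T e0‖ ≤ 0› this
      exact norm_eq_zero.mp h0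
    rw [hTz, zero_smul]
  · rcases le_total (-m) M with hcase | hcase
    · -- C = M
      have hCM : C = M := max_eq_left hcase
      have happrox : ∀ ε : ℝ, 0 < ε → ∃ x : E, ‖x‖ = 1 ∧ C - ε < ⟪T x, x⟫_ℝ := by
        intro ε hε
        have hlt : M - ε < sSup Q := by rw [← hM]; linarith
        obtain ⟨r, hrQ, hrlt⟩ := exists_lt_of_lt_csSup hQne hlt
        obtain ⟨x, hx1, rfl⟩ := hrQ
        exact ⟨x, hx1, by rw [hCM]; linarith⟩
      obtain ⟨x, hx1, hx2⟩ := my_eigen_max T hcp hCpos happrox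
        (by intro x; exact hnorm x)
      exact ⟨x, C, hx1, hx2⟩
    · -- C = -m, use -T
      have hCm : C = -m := max_eq_right hcase
      have hcp' : IsCompactOperator (⇑(-T)) := by
        have h := hcp.neg
        have hco : ⇑(-T) = -⇑T := by ext x; simp
        rw [hco]
        exact h
      have happrox : ∀ ε : ℝ, 0 < ε → ∃ x : E, ‖x‖ = 1 ∧ C - ε < ⟪(-T) x, x⟫_ℝ := by
        intro ε hε
        have hlt : sInf Q < m + ε := by rw [← hm]; linarith
        obtain ⟨r, hrQ, hrlt⟩ := exists_lt_of_csInf_lt hQne hlt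
        obtain ⟨x, hx1, rfl⟩ := hrQ
        refine ⟨x, hx1, ?_⟩
        have : ⟪(-T) x, x⟫_ℝ = -⟪T x, x⟫_ℝ := by
          rw [ContinuousLinearMap.neg_apply, inner_neg_left]
        rw [this, hCm]
        linarith
      have hnorm' : ∀ x : E, ‖(-T) x‖ ≤ C * ‖x‖ := by
        intro x
        rw [ContinuousLinearMap.neg_apply, norm_neg]
        exact hnorm x
      obtain ⟨x, hx1, hx2⟩ := my_eigen_max (-T) hcp' hCpos happrox hnorm'
      refine ⟨x, -C, hx1, ?_⟩
      rw [ContinuousLinearMap.neg_apply] at hx2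
      have : T x = -(C • x) := by
        have := congrArg Neg.neg hx2
        simpa using this
      rw [this, neg_smul]

lemma my_exists_eigenbasis {G : Type*} [NormedAddCommGroup G] [InnerProductSpace ℝ G]
    [CompleteSpace G] (K : G →L[ℝ] G) (hsa : IsSelfAdjoint K)
    (hcp : IsCompactOperator K) :
    ∃ (s : Set G) (b : HilbertBasis s ℝ G), (⇑b = (Subtype.val : s → G)) ∧
      ∀ x ∈ s, ∃ μ : ℝ, K x = μ • x := by
  classical
  have hsym := ContinuousLinearMap.isSelfAdjoint_iff_isSymmetric.mp hsa
  set 𝒮 : Set (Set G) := {t : Set G | Orthonormal ℝ (Subtype.val : t → G) ∧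
    ∀ x ∈ t, ∃ μ : ℝ, K x = μ • x} with h𝒮
  obtain ⟨s, hs_max⟩ := zorn_subset 𝒮 (by
    intro c hc hchain
    refine ⟨⋃₀ c, ⟨?_, ?_⟩, fun t ht => Set.subset_sUnion_of_mem ht⟩
    · exact orthonormal_sUnion_of_directed hchain.directedOn fun a ha => (hc ha).1
    · rintro x ⟨t, htc, hxt⟩
      exact (hc htc).2 x hxt)
  obtain ⟨hs_on, hs_eig⟩ := hs_max.prop
  -- claim the orthogonal complement of the span is trivial
  have horth : (Submodule.span ℝ s)ᗮ = ⊥ := by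
    by_contra hne
    set W : Submodule ℝ G := (Submodule.span ℝ s)ᗮ with hW
    haveI : CompleteSpace W := (Submodule.isClosed_orthogonal _).completeSpace_coe
    haveI : Nontrivial W := Submodule.nontrivial_iff_ne_bot.mpr hne
    -- K maps W into W
    have hinv : ∀ x : W, K (x : G) ∈ W := by
      intro x
      refine (Submodule.mem_orthogonal (Submodule.span ℝ s) _).mpr ?_
      intro u hu
      induction hu using Submodule.span_induction with
      | mem u hu =>
          obtain ⟨μ, hμ⟩ := hs_eig u hu
          have hx : ⟪u, (x : G)⟫_ℝ = 0 :=
            (Submodule.mem_orthogonal (Submodule.span ℝ s) _).mp x.2 u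
              (Submodule.subset_span hu)
          calc ⟪u, K (x:G)⟫_ℝ = ⟪K u, (x:G)⟫_ℝ := (hsym u (x:G)).symm
            _ = μ * ⟪u, (x:G)⟫_ℝ := by rw [hμ, real_inner_smul_left]
            _ = 0 := by rw [hx, mul_zero]
      | zero => simp
      | add u v _ _ hu hv => rw [inner_add_left, hu, hv, add_zero]
      | smul a u _ hu => rw [real_inner_smul_left, hu, mul_zero]
    set K' : W →L[ℝ] W := (K.comp W.subtypeL).codRestrict W (fun x => hinv x) with hK'
    have hK'app : ∀ x : W, (K' x : G) = K (x : G) := fun x => rfl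
    have hK'sa : IsSelfAdjoint K' := by
      rw [ContinuousLinearMap.isSelfAdjoint_iff_isSymmetric]
      intro x y
      have : ⟪K' x, y⟫_ℝ = ⟪K (x:G), (y:G)⟫_ℝ := rfl
      rw [show ⟪(K' : W →ₗ[ℝ] W) x, y⟫_ℝ = ⟪K (x:G), (y:G)⟫_ℝ from rfl,
        show ⟪x, (K' : W →ₗ[ℝ] W) y⟫_ℝ = ⟪(x:G), K (y:G)⟫_ℝ from rfl]
      exact hsym (x:G) (y:G)
    have hK'cp : IsCompactOperator (⇑K') := by
      have h1 : IsCompactOperator (⇑(K.comp W.subtypeL)) := hcp.comp_clm W.subtypeL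
      have h2 : IsCompactOperator (Set.codRestrict (⇑(K.comp W.subtypeL)) W
          (fun x => hinv x)) := by
        exact h1.codRestrict (fun x => hinv x) (Submodule.isClosed_orthogonal _)
      exact h2
    obtain ⟨w, μ, hw1, hw2⟩ := my_exists_eigenvector K' hK'sa hK'cp
    -- w is a unit eigenvector of K orthogonal to s
    set u : G := (w : G) with hu
    have hun : ‖u‖ = 1 := hw1
    have hueig : K u = μ • u := by
      have := congrArg (Subtype.val : W → G) hw2
      rw [hK'app] at this
      simpa using this
    have huW : u ∈ W := w.2
    have huns : u ∉ s := by
      intro hus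
      have : ⟪u, u⟫_ℝ = 0 :=
        (Submodule.mem_orthogonal (Submodule.span ℝ s) _).mp huW u
          (Submodule.subset_span hus)
      rw [real_inner_self_eq_norm_sq, hun] at this
      norm_num at this
    -- insert u s is orthonormal and consists of eigenvectors
    have hins : insert u s ∈ 𝒮 := by
      constructor
      · rw [orthonormal_subtype_iff_ite]
        have hs_on' := orthonormal_subtype_iff_ite.mp hs_on
        intro x hx y hy
        have hucross : ∀ z ∈ s, ⟪u, z⟫_ℝ = 0 := by
          intro z hz
          rw [real_inner_comm]
          exact (Submodule.mem_orthogonal (Submodule.span ℝ s) _).mp huW z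
            (Submodule.subset_span hz)
        rcases hx with rfl | hxs
        · rcases hy with rfl | hys
          · simp [real_inner_self_eq_norm_sq, hun]
          · rw [if_neg (by rintro rfl; exact huns hys)]
            exact hucross y hys
        · rcases hy with rfl | hys
          · rw [if_neg (by rintro rfl; exact huns hxs)]
            rw [real_inner_comm]
            exact hucross x hxs
          · exact hs_on' x hxs y hys
      · intro x hx
        rcases hx with rfl | hxs
        · exact ⟨μ, hueig⟩
        · exact hs_eig x hxs
    have : insert u s ⊆ s := hs_max.2 hins (Set.subset_insert u s)
    exact huns (this (Set.mem_insert u s))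
  -- build the Hilbert basis
  have hrange : Set.range (Subtype.val : s → G) = s := Subtype.range_coe
  have hbot : (Submodule.span ℝ (Set.range (Subtype.val : s → G)))ᗮ = ⊥ := by
    rw [hrange]; exact horth
  refine ⟨s, HilbertBasis.mkOfOrthogonalEqBot hs_on hbot, ?_, hs_eig⟩
  exact HilbertBasis.coe_mkOfOrthogonalEqBot hs_on hbot

end MyAux

theorem exists_diagonalizing_bases {G₁ : Type u} {G₂ : Type v}
    [NormedAddCommGroup G₁] [InnerProductSpace ℝ G₁] [CompleteSpace G₁]
    [NormedAddCommGroup G₂] [InnerProductSpace ℝ G₂] [CompleteSpace G₂]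
    (A : G₁ →L[ℝ] G₂) (hA : MemS A)
    (S : G₁ →L[ℝ] G₁) (hSpos : S.IsPositive)
    (hSsq : S.comp S = (ContinuousLinearMap.adjoint A).comp A) :
    ∃ (ι : Type u) (e : HilbertBasis ι ℝ G₁) (lam : ι → ℝ),
      (∀ i, 0 < lam i) ∧
      (∀ i, S (e i) = lam i • e i) ∧
      Summable (fun i => (lam i - 1) ^ 2) ∧
      ∃ f : HilbertBasis ι ℝ G₂, ∀ i, f i = (lam i)⁻¹ • A (e i) := by
  classical
  obtain ⟨hAinvble, S₀, hS₀pos, hS₀sq, hHS⟩ := hA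
  obtain ⟨B, hBA, hAB⟩ := hAinvble
  obtain ⟨κ, bH, hbH⟩ := hHS
  -- A is injective
  have hBAx : ∀ x : G₁, B (A x) = x := by
    intro x
    rw [← ContinuousLinearMap.comp_apply, hBA, ContinuousLinearMap.id_apply]
  have hABy : ∀ y : G₂, A (B y) = y := by
    intro y
    rw [← ContinuousLinearMap.comp_apply, hAB, ContinuousLinearMap.id_apply]
  have hAinj : ∀ x : G₁, A x = 0 → x = 0 := by
    intro x hx
    have h1 := hBAx x
    rw [hx, map_zero] at h1
    exact h1.symm
  set K : G₁ →L[ℝ] G₁ := ContinuousLinearMap.id ℝ G₁ - S₀ with hKdef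
  have hS₀sa : IsSelfAdjoint S₀ := hS₀pos.isSelfAdjoint
  have hid_sa : IsSelfAdjoint (ContinuousLinearMap.id ℝ G₁) := by
    rw [← ContinuousLinearMap.one_def]
    exact IsSelfAdjoint.one _
  have hKsa : IsSelfAdjoint K := hid_sa.sub hS₀sa
  have hKcp : IsCompactOperator (⇑K) := my_hs_compact K bH hbH
  obtain ⟨s, e, he, heig⟩ := my_exists_eigenbasis K hKsa hKcp
  have hei : ∀ i : s, e i = (i : G₁) := fun i => congrFun he i
  -- eigenvalues
  have heig' : ∀ i : s, ∃ μ : ℝ, K (e i) = μ • e i := by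
    intro i
    obtain ⟨μ, hμ⟩ := heig (i : G₁) i.2
    exact ⟨μ, by rw [hei i]; exact hμ⟩
  choose mu hmu using heig'
  set lam : s → ℝ := fun i => 1 - mu i with hlam
  have hnorm_e : ∀ i : s, ‖e i‖ = 1 := fun i => e.orthonormal.1 i
  have hinner_e : ∀ i j : s, ⟪e i, e j⟫_ℝ = if i = j then 1 else 0 :=
    orthonormal_iff_ite.mp e.orthonormal
  have hS₀e : ∀ i : s, S₀ (e i) = lam i • e i := by
    intro i
    have h1 := hmu i
    rw [hKdef] at h1
    have h2 : e i - S₀ (e i) = mu i • e i := by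
      simpa using h1
    have : S₀ (e i) = e i - mu i • e i := by
      rw [← h2]; abel
    rw [this, hlam]
    rw [sub_smul, one_smul]
  -- positivity of S₀ and S in real terms
  have hS₀nonneg : ∀ x : G₁, 0 ≤ ⟪S₀ x, x⟫_ℝ := fun x => by
    simpa using hS₀pos.inner_nonneg_left x
  have hSnonneg : ∀ x : G₁, 0 ≤ ⟪S x, x⟫_ℝ := fun x => by
    simpa using hSpos.inner_nonneg_left x
  -- lam is nonnegative
  have hlam_nonneg : ∀ i : s, 0 ≤ lam i := by
    intro i
    have h1 := hS₀nonneg (e i)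
    rw [hS₀e i, real_inner_smul_left, hinner_e i i, if_pos rfl, mul_one] at h1
    exact h1
  -- lam i ^ 2 = ‖A (e i)‖ ^ 2 > 0
  have hS₀S₀ : ∀ i : s, S₀ (S₀ (e i)) = lam i ^ 2 • e i := by
    intro i
    rw [hS₀e i, map_smul, hS₀e i, smul_smul, sq]
  have hAA : ∀ x : G₁, S₀ (S₀ x) = (ContinuousLinearMap.adjoint A) (A x) := by
    intro x
    calc S₀ (S₀ x) = (S₀.comp S₀) x := rfl
      _ = ((ContinuousLinearMap.adjoint A).comp A) x := by rw [hS₀sq]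
      _ = (ContinuousLinearMap.adjoint A) (A x) := rfl
  have hSS : ∀ x : G₁, S (S x) = S₀ (S₀ x) := by
    intro x
    rw [hAA]
    calc S (S x) = (S.comp S) x := rfl
      _ = ((ContinuousLinearMap.adjoint A).comp A) x := by rw [hSsq]
      _ = (ContinuousLinearMap.adjoint A) (A x) := rfl
  have hlam_sq : ∀ i : s, lam i ^ 2 = ‖A (e i)‖ ^ 2 := by
    intro i
    have h1 : ⟪S₀ (S₀ (e i)), e i⟫_ℝ = lam i ^ 2 := by
      rw [hS₀S₀ i, real_inner_smul_left, hinner_e i i, if_pos rfl, mul_one]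
    have h2 : ⟪S₀ (S₀ (e i)), e i⟫_ℝ = ‖A (e i)‖ ^ 2 := by
      rw [hAA, ContinuousLinearMap.adjoint_inner_left, real_inner_self_eq_norm_sq]
    rw [← h1, h2]
  have hlam_pos : ∀ i : s, 0 < lam i := by
    intro i
    rcases (hlam_nonneg i).lt_or_eq with h | h
    · exact h
    · exfalso
      have hAe : A (e i) ≠ 0 := by
        intro hz
        have := hAinj (e i) hz
        have hn := hnorm_e i
        rw [this, norm_zero] at hn
        norm_num at hn
      have h2 := hlam_sq i
      rw [← h, ] at h2
      have h3 : ‖A (e i)‖ ^ 2 = 0 := by rw [← h2]; ring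
      have h4 : ‖A (e i)‖ = 0 := by
        nlinarith [norm_nonneg (A (e i))]
      exact hAe (norm_eq_zero.mp h4)
  -- S has the same eigenvectors
  have hSe : ∀ i : s, S (e i) = lam i • e i := by
    intro i
    set v : G₁ := S (e i) - lam i • e i with hv
    have hSv : S v = (- lam i) • v := by
      rw [hv, map_sub, map_smul]
      have h1 : S (S (e i)) = lam i ^ 2 • e i := by rw [hSS, hS₀S₀]
      rw [h1]
      rw [neg_smul, smul_sub, smul_smul]
      rw [sq]
      abel
    have hpos := hSnonneg v
    rw [hSv, real_inner_smul_left, neg_mul] at hpos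
    have h2 : 0 ≤ ⟪v, v⟫_ℝ := real_inner_self_nonneg
    have h3 : lam i * ⟪v, v⟫_ℝ ≤ 0 := by linarith
    have h4 : ⟪v, v⟫_ℝ = 0 := by
      rcases h2.lt_or_eq with h | h
      · exfalso
        have := mul_pos (hlam_pos i) h
        linarith
      · exact h.symm
    have h5 : v = 0 := inner_self_eq_zero.mp h4
    have h6 : S (e i) - lam i • e i = 0 := h5
    rw [sub_eq_zero] at h6
    exact h6
  -- summability
  have hsum : Summable fun i : s => (lam i - 1) ^ 2 := by
    have h1 : Summable fun i : s => ‖K (e i)‖ ^ 2 :=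
      my_transfer K hKsa hbH e.orthonormal
    refine h1.congr fun i => ?_
    have h2 : K (e i) = (1 - lam i) • e i := by
      rw [hmu i, hlam]
      dsimp only
      rw [sub_sub_cancel]
    rw [h2, norm_smul, Real.norm_eq_abs, hnorm_e i, mul_one, sq_abs]
    ring
  -- the image family
  set f : s → G₂ := fun i => (lam i)⁻¹ • A (e i) with hf
  have hinner_Ae : ∀ i j : s, ⟪A (e i), A (e j)⟫_ℝ = lam i ^ 2 * (if i = j then 1 else 0) := by
    intro i j
    rw [← ContinuousLinearMap.adjoint_inner_left, ← hAA, hS₀S₀, real_inner_smul_left,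
      hinner_e i j]
  have hf_on : Orthonormal ℝ f := by
    rw [orthonormal_iff_ite]
    intro i j
    rw [hf]
    dsimp only
    rw [real_inner_smul_left, real_inner_smul_right, hinner_Ae i j]
    rcases eq_or_ne i j with hij | hij
    · subst hij
      simp only [if_pos rfl]
      have hne := (hlam_pos i).ne'
      field_simp
    · simp only [if_neg hij]
      ring
  have hf_dense : ⊤ ≤ (Submodule.span ℝ (Set.range f)).topologicalClosure := by
    intro y _
    have hBy : B y ∈ closure ((Submodule.span ℝ (Set.range ⇑e) : Submodule ℝ G₁) : Set G₁) := by
      have h1 := e.dense_span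
      have h2 : B y ∈ (Submodule.span ℝ (Set.range ⇑e)).topologicalClosure := by
        rw [h1]; trivial
      rwa [← Submodule.topologicalClosure_coe, SetLike.mem_coe]
    have hyA : y = A (B y) := (hABy y).symm
    have h3 : A (B y) ∈ closure (⇑A '' ((Submodule.span ℝ (Set.range ⇑e)) : Set G₁)) :=
      image_closure_subset_closure_image A.continuous ⟨B y, hBy, rfl⟩
    have h4 : ⇑A '' ((Submodule.span ℝ (Set.range ⇑e)) : Set G₁)
        ⊆ ((Submodule.span ℝ (Set.range f)) : Set G₂) := by
      have hmap : Submodule.map (A : G₁ →ₗ[ℝ] G₂) (Submodule.span ℝ (Set.range ⇑e))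
          ≤ Submodule.span ℝ (Set.range f) := by
        rw [Submodule.map_span, Submodule.span_le]
        rintro _ ⟨_, ⟨i, rfl⟩, rfl⟩
        have hApe : A (e i) = lam i • f i := by
          rw [hf]
          dsimp only
          rw [smul_smul, mul_inv_cancel₀ (hlam_pos i).ne', one_smul]
        rw [ContinuousLinearMap.coe_coe, hApe]
        exact Submodule.smul_mem _ _ (Submodule.subset_span ⟨i, rfl⟩)
      intro z hz
      obtain ⟨w, hw, rfl⟩ := hz
      exact hmap (Submodule.mem_map_of_mem hw)
    have h5 : A (B y) ∈ closure ((Submodule.span ℝ (Set.range f)) : Set G₂) :=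
      closure_mono h4 h3
    rw [← SetLike.mem_coe, Submodule.topologicalClosure_coe]
    rw [hyA]
    exact h5
  refine ⟨s, e, lam, hlam_pos, hSe, hsum, HilbertBasis.mk hf_on hf_dense, fun i => ?_⟩
  rw [show ⇑(HilbertBasis.mk hf_on hf_dense) = f from HilbertBasis.coe_mk hf_on hf_dense]


end
end

section
/- Let (Gₙ) be a sequence of closed subspaces of a real Hilbert space H. Then limsup Gₙ = (liminf Gₙ^⊥)^⊥; that is, the closed linear span of all weak subsequential limits of sequences xₙ ∈ Gₙ equals the orthogonal complement of the subspace {y ∈ H : y = lim yₙ in norm for some sequence yₙ with yₙ ∈ Gₙ^⊥}. -/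
open Filter Topology
open scoped InnerProductSpace

/-- `liminf Gₙ`: the set of vectors that are norm limits of sequences `xₙ ∈ Gₙ`. -/
def liminfSet {H : Type*} [NormedAddCommGroup H] [InnerProductSpace ℝ H]
    (G : ℕ → Submodule ℝ H) : Set H :=
  {x | ∃ xs : ℕ → H, (∀ n, xs n ∈ G n) ∧ Tendsto xs atTop (nhds x)}

/-- Weak convergence of a sequence in an inner product space. -/
def WeakTendsto {H : Type*} [NormedAddCommGroup H] [InnerProductSpace ℝ H]
    (xs : ℕ → H) (x : H) : Prop :=
  ∀ y : H, Tendsto (fun n => ⟪xs n, y⟫_ℝ) atTop (nhds ⟪x, y⟫_ℝ)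

/-- The set of weak limits of weakly convergent subsequences `x_{kₙ} ∈ G_{kₙ}`. -/
def weakSubseqLimits {H : Type*} [NormedAddCommGroup H] [InnerProductSpace ℝ H]
    (G : ℕ → Submodule ℝ H) : Set H :=
  {x | ∃ k : ℕ → ℕ, StrictMono k ∧
    ∃ xs : ℕ → H, (∀ n, xs n ∈ G (k n)) ∧ WeakTendsto xs x}

/-- `limsup Gₙ`: the closed linear span of all weak subsequential limits. -/
noncomputable def limsupSubmodule {H : Type*} [NormedAddCommGroup H]
    [InnerProductSpace ℝ H] (G : ℕ → Submodule ℝ H) : Submodule ℝ H :=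
  (Submodule.span ℝ (weakSubseqLimits G)).topologicalClosure

section Aux

variable {H : Type*} [NormedAddCommGroup H] [InnerProductSpace ℝ H] [CompleteSpace H]

/-- A weakly convergent sequence is norm-bounded (Banach–Steinhaus). -/
lemma weakTendsto_bound {xs : ℕ → H} {x : H} (h : WeakTendsto xs x) :
    ∃ C : ℝ, ∀ n, ‖xs n‖ ≤ C := by
  have hb : ∀ y : H, ∃ C : ℝ, ∀ n : ℕ, ‖(innerSL ℝ (xs n)) y‖ ≤ C := by
    intro y
    obtain ⟨C, hC⟩ := ((h y).norm).bddAbove_range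
    exact ⟨C, fun n => hC (Set.mem_range_self n)⟩
  obtain ⟨C, hC⟩ := banach_steinhaus hb
  refine ⟨C, fun n => ?_⟩
  have := hC n
  rwa [innerSL_apply_norm] at this

/-- Weak sequential compactness of bounded sequences in a Hilbert space. -/
lemma exists_weak_subseq {C : ℝ} {v : ℕ → H} (hv : ∀ n, ‖v n‖ ≤ C) :
    ∃ φ : ℕ → ℕ, StrictMono φ ∧ ∃ w : H, WeakTendsto (fun n => v (φ n)) w := by
  classical
  set K : Submodule ℝ H := (Submodule.span ℝ (Set.range v)).topologicalClosure with hKdef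
  haveI : CompleteSpace K := (Submodule.isClosed_topologicalClosure _).completeSpace_coe
  have hvK : ∀ n, v n ∈ K :=
    fun n => (Submodule.span ℝ (Set.range v)).le_topologicalClosure
      (Submodule.subset_span (Set.mem_range_self n))
  -- a countable dense family in K
  have hsep : TopologicalSpace.IsSeparable (K : Set H) := by
    have h1 : TopologicalSpace.IsSeparable (Submodule.span ℝ (Set.range v) : Set H) :=
      (Set.countable_range v).isSeparable.span
    simpa [hKdef, Submodule.topologicalClosure_coe] using h1.closure
  obtain ⟨c, hc_count, hc_sub⟩ := hsep
  obtain ⟨e, he⟩ := (hc_count.insert (0 : H)).exists_eq_range (Set.insert_nonempty _ _)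
  have happrox : ∀ y ∈ (K : Set H), ∀ ε : ℝ, 0 < ε → ∃ i : ℕ, ‖y - e i‖ < ε := by
    intro y hy ε hε
    have : y ∈ closure (Set.range e) := by
      rw [← he]
      exact closure_mono (Set.subset_insert _ _) (hc_sub hy)
    obtain ⟨b, hb, hby⟩ := Metric.mem_closure_iff.1 this ε hε
    obtain ⟨i, rfl⟩ := hb
    exact ⟨i, by rwa [← dist_eq_norm]⟩
  -- extract a subsequence along which inner products with all `e i` converge
  have hC0 : (0 : ℝ) ≤ C := le_trans (norm_nonneg _) (hv 0)
  have hFmem : ∀ n, (fun i => ⟪v n, e i⟫_ℝ) ∈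
      Set.univ.pi (fun i : ℕ => Metric.closedBall (0 : ℝ) (C * ‖e i‖)) := by
    intro n
    intro i _
    rw [Metric.mem_closedBall, dist_zero_right, Real.norm_eq_abs]
    calc |⟪v n, e i⟫_ℝ| ≤ ‖v n‖ * ‖e i‖ := abs_real_inner_le_norm _ _
      _ ≤ C * ‖e i‖ := mul_le_mul_of_nonneg_right (hv n) (norm_nonneg _)
  have hcomp : IsCompact (Set.univ.pi fun i : ℕ => Metric.closedBall (0 : ℝ) (C * ‖e i‖)) :=
    isCompact_univ_pi fun i => isCompact_closedBall 0 _
  obtain ⟨l, -, φ, hφ, hl⟩ := hcomp.tendsto_subseq hFmem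
  have hpt : ∀ i : ℕ, Tendsto (fun n => ⟪v (φ n), e i⟫_ℝ) atTop (𝓝 (l i)) := by
    intro i
    exact (tendsto_pi_nhds.1 hl) i
  set u : ℕ → H := fun n => v (φ n) with hu
  have hub : ∀ n, ‖u n‖ ≤ C := fun n => hv _
  -- convergence of inner products with every vector
  have hconv : ∀ y : H, ∃ L : ℝ, Tendsto (fun n => ⟪u n, y⟫_ℝ) atTop (𝓝 L) := by
    intro y
    set p : H := (Submodule.orthogonalProjection K y : H) with hp
    have hyd : ∀ n, ⟪u n, y⟫_ℝ = ⟪u n, p⟫_ℝ := by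
      intro n
      have h1 : y - p ∈ Kᗮ := Submodule.sub_starProjection_mem_orthogonal y
      have h2 : ⟪u n, y - p⟫_ℝ = 0 :=
        (Submodule.mem_orthogonal K (y - p)).1 h1 (u n) (hvK (φ n))
      rw [inner_sub_right] at h2
      linarith
    have hcau : CauchySeq (fun n => ⟪u n, p⟫_ℝ) := by
      rw [Metric.cauchySeq_iff]
      intro ε hε
      have hδ : (0 : ℝ) < ε / (4 * (C + 1)) := by positivity
      obtain ⟨i, hi⟩ := happrox p (SetLike.coe_mem _) _ hδ
      obtain ⟨N, hN⟩ := Metric.cauchySeq_iff.1 (hpt i).cauchySeq (ε / 2) (by positivity)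
      refine ⟨N, fun m hm n hn => ?_⟩
      have key : ∀ a b : H, ‖a‖ ≤ C → ‖b‖ ≤ C →
          dist (⟪a, p⟫_ℝ) (⟪b, p⟫_ℝ) ≤ dist (⟪a, e i⟫_ℝ) (⟪b, e i⟫_ℝ) + 2 * C * ‖p - e i‖ := by
        intro a b ha hb
        rw [Real.dist_eq, Real.dist_eq, ← inner_sub_left, ← inner_sub_left]
        have h3 : ⟪a - b, p⟫_ℝ = ⟪a - b, e i⟫_ℝ + ⟪a - b, p - e i⟫_ℝ := by
          rw [← inner_add_right]
          congr 1
          abel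
        rw [h3]
        calc |⟪a - b, e i⟫_ℝ + ⟪a - b, p - e i⟫_ℝ|
            ≤ |⟪a - b, e i⟫_ℝ| + |⟪a - b, p - e i⟫_ℝ| := abs_add_le _ _
          _ ≤ |⟪a - b, e i⟫_ℝ| + 2 * C * ‖p - e i‖ := by
              have h4 : |⟪a - b, p - e i⟫_ℝ| ≤ ‖a - b‖ * ‖p - e i‖ := abs_real_inner_le_norm _ _
              have h5 : ‖a - b‖ ≤ 2 * C := by
                calc ‖a - b‖ ≤ ‖a‖ + ‖b‖ := norm_sub_le _ _
                  _ ≤ 2 * C := by linarith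
              have h6 : ‖a - b‖ * ‖p - e i‖ ≤ 2 * C * ‖p - e i‖ :=
                mul_le_mul_of_nonneg_right h5 (norm_nonneg _)
              linarith
      have h7 := key (u m) (u n) (hub m) (hub n)
      have h8 := hN m hm n hn
      have h9 : 2 * C * ‖p - e i‖ ≤ 2 * C * (ε / (4 * (C + 1))) :=
        mul_le_mul_of_nonneg_left hi.le (by linarith)
      have h10 : 2 * C * (ε / (4 * (C + 1))) ≤ ε / 2 := by
        rw [show 2 * C * (ε / (4 * (C + 1))) = 2 * C * ε / (4 * (C + 1)) by ring,
          div_le_div_iff₀ (by positivity) (by norm_num : (0:ℝ) < 2)]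
        nlinarith
      calc dist (⟪u m, p⟫_ℝ) (⟪u n, p⟫_ℝ)
          ≤ dist (⟪u m, e i⟫_ℝ) (⟪u n, e i⟫_ℝ) + 2 * C * ‖p - e i‖ := h7
        _ < ε / 2 + ε / 2 := by linarith
        _ = ε := by ring
    obtain ⟨L, hL⟩ := cauchySeq_tendsto_of_complete hcau
    exact ⟨L, by simpa only [hyd] using hL⟩
  choose f hf using hconv
  have htends : Tendsto (fun n (y : H) => (innerSL ℝ (u n)) y) atTop (𝓝 f) := by
    rw [tendsto_pi_nhds]
    intro y
    exact hf y
  let T : H →L[ℝ] ℝ := continuousLinearMapOfTendsto (fun n => innerSL ℝ (u n)) htends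
  refine ⟨φ, hφ, (InnerProductSpace.toDual ℝ H).symm T, fun y => ?_⟩
  have h1 : ⟪(InnerProductSpace.toDual ℝ H).symm T, y⟫_ℝ = T y :=
    InnerProductSpace.toDual_symm_apply
  have h2 : T y = f y := rfl
  rw [h1, h2]
  exact hf y

end Aux

theorem limsup_eq_orthogonal_of_liminf_orthogonal {H : Type*} [NormedAddCommGroup H]
    [InnerProductSpace ℝ H] [CompleteSpace H] (G : ℕ → Submodule ℝ H)
    (hG : ∀ n, IsClosed ((G n : Set H))) :
    (limsupSubmodule G : Set H) =
      {y : H | ∀ x ∈ liminfSet (fun n => (G n)ᗮ), ⟪x, y⟫_ℝ = 0} := by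
  haveI : ∀ n, CompleteSpace (G n) := fun n => (hG n).completeSpace_coe
  apply Set.Subset.antisymm
  · -- limsup ⊆ (liminf ⊥)⊥
    intro y hy x hx
    obtain ⟨ys, hys, hysl⟩ := hx
    have hsub : weakSubseqLimits G ⊆ (LinearMap.ker (innerSL ℝ x : H →ₗ[ℝ] ℝ) : Set H) := by
      rintro w ⟨k, hk, xs, hxs, hw⟩
      obtain ⟨C, hC⟩ := weakTendsto_bound hw
      have h1 : Tendsto (fun n => ⟪xs n, x⟫_ℝ) atTop (𝓝 ⟪w, x⟫_ℝ) := hw x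
      have h2 : Tendsto (fun n => ⟪xs n, x⟫_ℝ) atTop (𝓝 0) := by
        have heq : ∀ n, ⟪xs n, x⟫_ℝ = ⟪xs n, x - ys (k n)⟫_ℝ := by
          intro n
          have h0 : ⟪xs n, ys (k n)⟫_ℝ = 0 :=
            (Submodule.mem_orthogonal (G (k n)) (ys (k n))).1 (hys (k n)) (xs n) (hxs n)
          rw [inner_sub_right, h0, sub_zero]
        have h3 : Tendsto (fun n => ys (k n)) atTop (𝓝 x) := hysl.comp hk.tendsto_atTop
        have h4 : Tendsto (fun n => C * ‖x - ys (k n)‖) atTop (𝓝 0) := by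
          have h5 : Tendsto (fun n => x - ys (k n)) atTop (𝓝 (x - x)) :=
            tendsto_const_nhds.sub h3
          rw [sub_self] at h5
          have := h5.norm.const_mul C
          simpa using this
        refine squeeze_zero_norm (fun n => ?_) h4
        rw [heq n, Real.norm_eq_abs]
        calc |⟪xs n, x - ys (k n)⟫_ℝ| ≤ ‖xs n‖ * ‖x - ys (k n)‖ := abs_real_inner_le_norm _ _
          _ ≤ C * ‖x - ys (k n)‖ := mul_le_mul_of_nonneg_right (hC n) (norm_nonneg _)
      have h6 : ⟪w, x⟫_ℝ = 0 := tendsto_nhds_unique h1 h2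
      have : (innerSL ℝ x) w = 0 := by
        rw [innerSL_apply_apply, real_inner_comm]
        exact h6
      exact LinearMap.mem_ker.2 this
    have hle : limsupSubmodule G ≤ LinearMap.ker (innerSL ℝ x : H →ₗ[ℝ] ℝ) :=
      Submodule.topologicalClosure_minimal _ (Submodule.span_le.2 hsub)
        (ContinuousLinearMap.isClosed_ker _)
    have := hle hy
    rw [LinearMap.mem_ker] at this
    exact this
  · -- (liminf ⊥)⊥ ⊆ limsup
    intro y hy
    set K : Submodule ℝ H := limsupSubmodule G with hKdef
    haveI : CompleteSpace K := (Submodule.isClosed_topologicalClosure _).completeSpace_coe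
    set z : H := y - (Submodule.orthogonalProjection K y : H) with hz
    have hzK : z ∈ Kᗮ := Submodule.sub_starProjection_mem_orthogonal y
    have hzlim : z ∈ liminfSet (fun n => (G n)ᗮ) := by
      refine ⟨fun n => z - (Submodule.orthogonalProjection (G n) z : H),
        fun n => Submodule.sub_starProjection_mem_orthogonal z, ?_⟩
      have hP : Tendsto (fun n => ((Submodule.orthogonalProjection (G n) z : H))) atTop (𝓝 0) := by
        by_contra hcon
        rw [Metric.tendsto_atTop] at hcon
        push_neg at hcon
        obtain ⟨ε, hε, hfreq⟩ := hcon
        obtain ⟨k, hk, hks⟩ := extraction_of_frequently_atTop (frequently_atTop.2 hfreq)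
        set v : ℕ → H := fun n => (Submodule.orthogonalProjection (G (k n)) z : H) with hvdef
        have hvb : ∀ n, ‖v n‖ ≤ ‖z‖ := by
          intro n
          calc ‖v n‖ ≤ ‖Submodule.orthogonalProjection (G (k n))‖ * ‖z‖ :=
              (Submodule.orthogonalProjection (G (k n))).le_opNorm z
            _ ≤ 1 * ‖z‖ := mul_le_mul_of_nonneg_right (Submodule.orthogonalProjection_norm_le (G (k n))) (norm_nonneg _)
            _ = ‖z‖ := one_mul _
        obtain ⟨φ, hφ, w, hw⟩ := exists_weak_subseq hvb
        have hwK : w ∈ K := by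
          apply (Submodule.span ℝ (weakSubseqLimits G)).le_topologicalClosure
          apply Submodule.subset_span
          exact ⟨k ∘ φ, hk.comp hφ, fun n => v (φ n),
            fun n => SetLike.coe_mem _, hw⟩
        have hzw : ⟪w, z⟫_ℝ = 0 := (Submodule.mem_orthogonal K z).1 hzK w hwK
        have hlim : Tendsto (fun n => ⟪v (φ n), z⟫_ℝ) atTop (𝓝 0) := by
          have := hw z
          rwa [hzw] at this
        have hge : ∀ n, ε ^ 2 ≤ ⟪v (φ n), z⟫_ℝ := by
          intro n
          have h0 : ⟪v (φ n), z - v (φ n)⟫_ℝ = 0 :=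
            (Submodule.mem_orthogonal (G (k (φ n))) _).1
              (Submodule.sub_starProjection_mem_orthogonal z) _ (SetLike.coe_mem _)
          rw [inner_sub_right] at h0
          have h1 : ⟪v (φ n), z⟫_ℝ = ‖v (φ n)‖ ^ 2 := by
            rw [← real_inner_self_eq_norm_sq]
            linarith
          have h2 : ε ≤ ‖v (φ n)‖ := by
            have := hks (φ n)
            rwa [dist_zero_right] at this
          rw [h1]
          exact pow_le_pow_left₀ hε.le h2 2
        have hfin : ε ^ 2 ≤ 0 := ge_of_tendsto hlim (Filter.Eventually.of_forall hge)
        nlinarith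
      have h3 : Tendsto (fun n => z - (Submodule.orthogonalProjection (G n) z : H)) atTop (𝓝 (z - 0)) :=
        tendsto_const_nhds.sub hP
      simpa using h3
    have h0 : ⟪z, y⟫_ℝ = 0 := hy z hzlim
    have h1 : ⟪z, y⟫_ℝ = ‖z‖ ^ 2 := by
      have h2 : ⟪z, (Submodule.orthogonalProjection K y : H)⟫_ℝ = 0 := by
        have h3 : ⟪(Submodule.orthogonalProjection K y : H), z⟫_ℝ = 0 :=
          (Submodule.mem_orthogonal K z).1 hzK _ (SetLike.coe_mem _)
        rw [real_inner_comm]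
        exact h3
      have h4 : y = z + (Submodule.orthogonalProjection K y : H) := by rw [hz]; abel
      calc ⟪z, y⟫_ℝ = ⟪z, z + (Submodule.orthogonalProjection K y : H)⟫_ℝ := by rw [← h4]
        _ = ‖z‖ ^ 2 := by rw [inner_add_right, h2, add_zero, real_inner_self_eq_norm_sq]
    have hz0 : z = 0 := by
      have h5 : ‖z‖ ^ 2 = 0 := by rw [← h1, h0]
      have h6 : ‖z‖ = 0 := by nlinarith [norm_nonneg z]
      exact norm_eq_zero.1 h6
    have h7 : y = (Submodule.orthogonalProjection K y : H) := by
      have := sub_eq_zero.1 (hz ▸ hz0)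
      exact this
    rw [h7]
    exact SetLike.coe_mem _
end
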